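/- arXiv:1711.03539 — 4 statements merged into one kernel-verified Lean document; each statement's English description precedes it below -/
import Mathlib

section
/- Let (η_k)_{k≥1} be i.i.d. real-valued random variables, let ε ≥ 0 and h > 0. Define the steps s_k⁺ = η_k − ε and s_k⁻ = −η_k − ε, the statistics g_0⁺ = g_0⁻ = 0, g_k⁺ = max(0, g_{k−1}⁺ + s_k⁺), g_k⁻ = max(0, g_{k−1}⁻ + s_k⁻), and the hitting times H⁺ = inf{k ≥ 1 : g_k⁺ ≥ h}, H⁻ = inf{k ≥ 1 : g_k⁻ ≥ h}, and H = min(H⁺, H⁻). If E[H⁺] and E[H⁻] are finite and positive, then 1/E[H] = 1/E[H⁺] + 1/E[H⁻]. -/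
open MeasureTheory ProbabilityTheory
open scoped ENNReal

set_option linter.unusedSectionVars false
namespace CusumAux

/-- Deterministic CUSUM recursion. -/
def cus (ε : ℝ) : ℕ → (ℕ → ℝ) → ℝ
  | 0, _ => 0
  | k + 1, u => max 0 (cus ε k u + (u k - ε))

lemma cus_nonneg (ε : ℝ) (k : ℕ) (u : ℕ → ℝ) : 0 ≤ cus ε k u := by
  cases k with
  | zero => exact le_refl 0
  | succ k => exact le_max_left _ _

lemma cus_congr (ε : ℝ) {u v : ℕ → ℝ} : ∀ {k : ℕ}, (∀ i < k, u i = v i) →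
    cus ε k u = cus ε k v
  | 0, _ => rfl
  | k + 1, hc => by
    simp only [cus]
    rw [cus_congr ε (fun i hi => hc i (Nat.lt_succ_of_lt hi)), hc k (Nat.lt_succ_self k)]

lemma measurable_cus (ε : ℝ) (k : ℕ) : Measurable (cus ε k) := by
  induction k with
  | zero => exact measurable_const
  | succ k ih =>
    exact measurable_const.max (ih.add ((measurable_pi_apply k).sub measurable_const))

/-- restart property -/
lemma cus_shift (ε : ℝ) {n : ℕ} {u : ℕ → ℝ} (h0 : cus ε n u = 0) :
    ∀ k, cus ε (n + k) u = cus ε k (fun i => u (n + i)) := by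
  intro k
  induction k with
  | zero => simpa [cus] using h0
  | succ k ih =>
    have : n + (k + 1) = (n + k) + 1 := by omega
    rw [this]
    show max 0 (cus ε (n + k) u + (u (n + k) - ε)) = _
    rw [ih]
    rfl

/-- L1: if the plus side first crosses at `n+1`, the minus side cannot have increased. -/
lemma cus_other_le (ε h : ℝ) (hε : 0 ≤ ε) {u : ℕ → ℝ} {n : ℕ}
    (hprev : cus ε n u < h) (halarm : h ≤ cus ε (n + 1) u) :
    cus ε (n + 1) (fun i => -u i) ≤ cus ε n (fun i => -u i) := by
  have hpos : cus ε n u + (u n - ε) ≥ h := by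
    rcases le_or_gt (cus ε n u + (u n - ε)) 0 with hle | hlt
    · exfalso
      have : cus ε (n + 1) u = 0 := by simp only [cus]; exact max_eq_left hle
      rw [this] at halarm
      linarith [cus_nonneg ε n u]
    · have : cus ε (n + 1) u = cus ε n u + (u n - ε) := by
        simp only [cus]; exact max_eq_right hlt.le
      linarith [halarm, this ▸ halarm]
  have hun : 0 < u n - ε := by nlinarith [hprev]
  have : cus ε (n + 1) (fun i => -u i) = max 0 (cus ε n (fun i => -u i) + (-u n - ε)) := rfl
  rw [this]
  have := cus_nonneg ε n (fun i => -u i)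
  apply max_le this
  nlinarith

/-- invariant for L2 -/
lemma cus_sum_le (ε : ℝ) (hε : 0 ≤ ε) (u : ℕ → ℝ) :
    ∀ k, ∃ j ≤ k, cus ε k u + cus ε k (fun i => -u i) ≤
      max (cus ε j u) (cus ε j (fun i => -u i)) := by
  intro k
  induction k with
  | zero => exact ⟨0, le_refl 0, by simp [cus]⟩
  | succ k ih =>
    obtain ⟨j, hj, hsum⟩ := ih
    rcases le_or_gt (cus ε k u + (u k - ε)) 0 with h1 | h1
    · refine ⟨k + 1, le_refl _, ?_⟩
      have : cus ε (k + 1) u = 0 := max_eq_left h1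
      rw [this, zero_add]
      exact le_max_right _ _
    rcases le_or_gt (cus ε k (fun i => -u i) + (-u k - ε)) 0 with h2 | h2
    · refine ⟨k + 1, le_refl _, ?_⟩
      have : cus ε (k + 1) (fun i => -u i) = 0 := max_eq_left h2
      rw [this, add_zero]
      exact le_max_left _ _
    · refine ⟨j, hj.trans (Nat.le_succ k), ?_⟩
      have e1 : cus ε (k + 1) u = cus ε k u + (u k - ε) := max_eq_right h1.le
      have e2 : cus ε (k + 1) (fun i => -u i) = cus ε k (fun i => -u i) + (-u k - ε) :=
        max_eq_right h2.le
      rw [e1, e2]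
      have : cus ε k u + (u k - ε) + (cus ε k (fun i => -u i) + (-u k - ε)) =
          cus ε k u + cus ε k (fun i => -u i) - 2 * ε := by ring
      rw [this]
      linarith

/-- L2: at the first alarm, if the minus side alarms, the plus side is exactly 0. -/
lemma cus_zero_at_alarm (ε h : ℝ) (hε : 0 ≤ ε) (hh : 0 < h) {u : ℕ → ℝ} {n : ℕ}
    (hbefore : ∀ k, 1 ≤ k → k < n + 1 → cus ε k u < h ∧ cus ε k (fun i => -u i) < h)
    (halarm : h ≤ cus ε (n + 1) (fun i => -u i)) :
    cus ε (n + 1) u = 0 := by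
  -- plus side stays below h
  have hprevminus : cus ε n (fun i => -u i) < h := by
    rcases Nat.eq_zero_or_pos n with rfl | hn
    · simpa [cus] using hh
    · exact (hbefore n hn (Nat.lt_succ_self n)).2
  have hplus_lt : cus ε (n + 1) u < h := by
    have := cus_other_le ε h hε hprevminus halarm
    simp only [neg_neg] at this
    have hprevplus : cus ε n u < h := by
      rcases Nat.eq_zero_or_pos n with rfl | hn
      · simpa [cus] using hh
      · exact (hbefore n hn (Nat.lt_succ_self n)).1
    exact lt_of_le_of_lt this hprevplus
  obtain ⟨j, hj, hsum⟩ := cus_sum_le ε hε u (n + 1)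
  rcases Nat.lt_or_ge j (n + 1) with hjlt | hjge
  · exfalso
    have hmax : max (cus ε j u) (cus ε j (fun i => -u i)) < h := by
      rcases Nat.eq_zero_or_pos j with rfl | hjpos
      · simpa [cus] using hh
      · exact max_lt (hbefore j hjpos hjlt).1 (hbefore j hjpos hjlt).2
    have := cus_nonneg ε (n + 1) u
    have := cus_nonneg ε (n + 1) (fun i => -u i)
    linarith [lt_of_le_of_lt hsum hmax]
  · have hj' : j = n + 1 := le_antisymm hj hjge
    subst hj'
    have hmax : max (cus ε (n + 1) u) (cus ε (n + 1) (fun i => -u i)) =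
        cus ε (n + 1) (fun i => -u i) :=
      max_eq_right (hplus_lt.le.trans halarm)
    rw [hmax] at hsum
    have := cus_nonneg ε (n + 1) u
    linarith


variable {Ω : Type*} [MeasurableSpace Ω]

def gX (ξ : ℕ → Ω → ℝ) (ε : ℝ) (k : ℕ) (ω : Ω) : ℝ := cus ε k (fun i => ξ i ω)

def negSeq (ξ : ℕ → Ω → ℝ) : ℕ → Ω → ℝ := fun k ω => -(ξ k ω)

lemma negSeq_negSeq (ξ : ℕ → Ω → ℝ) : negSeq (negSeq ξ) = ξ := by
  funext k ω; simp [negSeq]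

noncomputable def hitT (ξ : ℕ → Ω → ℝ) (ε h : ℝ) (ω : Ω) : ℝ≥0∞ :=
  sInf ((fun n : ℕ => (n : ℝ≥0∞)) '' {k : ℕ | 1 ≤ k ∧ h ≤ gX ξ ε k ω})

lemma hit_le (ξ : ℕ → Ω → ℝ) (ε h : ℝ) {n : ℕ} {ω : Ω} (hn : 1 ≤ n)
    (ha : h ≤ gX ξ ε n ω) : hitT ξ ε h ω ≤ n :=
  sInf_le ⟨n, ⟨hn, ha⟩, rfl⟩

lemma hit_ge (ξ : ℕ → Ω → ℝ) (ε h : ℝ) (m : ℕ) (ω : Ω) :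
    ((m : ℝ≥0∞) ≤ hitT ξ ε h ω) ↔ ∀ k, 1 ≤ k → k < m → gX ξ ε k ω < h := by
  constructor
  · intro hle k hk1 hkm
    by_contra hcon
    push_neg at hcon
    have := (hit_le ξ ε h hk1 hcon).trans_lt (lt_of_lt_of_le (by exact_mod_cast hkm) hle)
    exact lt_irrefl _ this
  · intro hb
    refine le_sInf ?_
    rintro x ⟨k, ⟨hk1, hkh⟩, rfl⟩
    by_contra hc
    push_neg at hc
    have hkm : k < m := by exact_mod_cast hc
    exact absurd hkh (not_le.mpr (hb k hk1 hkm))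

lemma hit_gt (ξ : ℕ → Ω → ℝ) (ε h : ℝ) (m : ℕ) (ω : Ω) :
    ((m : ℝ≥0∞) < hitT ξ ε h ω) ↔ ∀ k, 1 ≤ k → k ≤ m → gX ξ ε k ω < h := by
  constructor
  · intro hlt k hk1 hkm
    by_contra hcon
    push_neg at hcon
    have h1 := hit_le ξ ε h hk1 hcon
    have : (m : ℝ≥0∞) < (k : ℝ≥0∞) := lt_of_lt_of_le hlt h1
    have : m < k := by exact_mod_cast this
    omega
  · intro hb
    have : ((m + 1 : ℕ) : ℝ≥0∞) ≤ hitT ξ ε h ω := by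
      rw [hit_ge]
      intro k hk1 hkm
      exact hb k hk1 (by omega)
    refine lt_of_lt_of_le ?_ this
    exact_mod_cast Nat.lt_succ_self m

lemma hit_one_le (ξ : ℕ → Ω → ℝ) (ε h : ℝ) (ω : Ω) : 1 ≤ hitT ξ ε h ω := by
  have := (hit_ge ξ ε h 1 ω).mpr (by intro k hk1 hk; omega)
  simpa using this

lemma hit_nat_or_top (ξ : ℕ → Ω → ℝ) (ε h : ℝ) (ω : Ω) :
    (∃ n : ℕ, hitT ξ ε h ω = n) ∨ hitT ξ ε h ω = ⊤ := by
  set A := {k : ℕ | 1 ≤ k ∧ h ≤ gX ξ ε k ω} with hA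
  rcases Set.eq_empty_or_nonempty A with he | hne
  · right
    rw [hitT, ← hA, he]
    simp
  · left
    refine ⟨sInf A, ?_⟩
    rw [hitT, ← hA]
    refine le_antisymm (sInf_le ⟨sInf A, Nat.sInf_mem hne, rfl⟩) ?_
    refine le_sInf ?_
    rintro x ⟨k, hk, rfl⟩
    simp only []
    exact_mod_cast Nat.sInf_le hk

lemma tsum_lt_cast (a : ℝ≥0∞) (ha : (∃ n : ℕ, a = n) ∨ a = ⊤) :
    ∑' m : ℕ, (if (m : ℝ≥0∞) < a then (1 : ℝ≥0∞) else 0) = a := by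
  rcases ha with ⟨n, rfl⟩ | rfl
  · have hcongr : ∀ m : ℕ, (if (m : ℝ≥0∞) < (n : ℝ≥0∞) then (1 : ℝ≥0∞) else 0) =
        if m < n then 1 else 0 := by
      intro m; simp [Nat.cast_lt]
    rw [tsum_congr hcongr, tsum_eq_sum (s := Finset.range n)
      (fun m hm => if_neg (by simpa using hm))]
    rw [Finset.sum_ite_of_true (by intro m hm; simpa using hm)]
    simp
  · simp only [lt_top_iff_ne_top]
    rw [tsum_congr (fun m : ℕ => if_pos (by simp : (m : ℝ≥0∞) ≠ ⊤))]
    exact ENNReal.tsum_const_eq_top_of_ne_zero one_ne_zero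

/-- layer cake for `ℕ∞`-valued functions. -/
lemma lintegral_nat_valued (ν : Measure Ω) (f : Ω → ℝ≥0∞)
    (hf : ∀ ω, (∃ n : ℕ, f ω = n) ∨ f ω = ⊤)
    (hms : ∀ m : ℕ, MeasurableSet {ω | (m : ℝ≥0∞) < f ω}) :
    ∫⁻ ω, f ω ∂ν = ∑' m : ℕ, ν {ω | (m : ℝ≥0∞) < f ω} := by
  have key : ∀ ω, f ω = ∑' m : ℕ,
      Set.indicator {ω | (m : ℝ≥0∞) < f ω} (fun _ => (1 : ℝ≥0∞)) ω := by
    intro ω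
    have : ∀ m : ℕ, Set.indicator {ω | (m : ℝ≥0∞) < f ω} (fun _ => (1 : ℝ≥0∞)) ω =
        if (m : ℝ≥0∞) < f ω then 1 else 0 := fun m => Set.indicator_apply _ _ _
    rw [tsum_congr this]
    exact (tsum_lt_cast (f ω) (hf ω)).symm
  rw [lintegral_congr key, lintegral_tsum
    (fun m => (measurable_const.indicator (hms m)).aemeasurable)]
  exact tsum_congr fun m => lintegral_indicator_one (hms m)

section Events

variable {Ω : Type*} [MeasurableSpace Ω]

def beforeS (ξ : ℕ → Ω → ℝ) (ε h : ℝ) (n : ℕ) : Set Ω :=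
  {ω | ∀ k, 1 ≤ k → k < n → gX ξ ε k ω < h ∧ gX (negSeq ξ) ε k ω < h}

def AS (ξ : ℕ → Ω → ℝ) (ε h : ℝ) (n : ℕ) : Set Ω :=
  beforeS ξ ε h n ∩ {ω | h ≤ gX ξ ε n ω}

def BS (ξ : ℕ → Ω → ℝ) (ε h : ℝ) (n : ℕ) : Set Ω :=
  beforeS ξ ε h n ∩ {ω | h ≤ gX (negSeq ξ) ε n ω}

lemma gX_zero (ξ : ℕ → Ω → ℝ) (ε : ℝ) (ω : Ω) : gX ξ ε 0 ω = 0 := rfl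

lemma gX_negSeq_eq (ξ : ℕ → Ω → ℝ) (ε : ℝ) (k : ℕ) (ω : Ω) :
    gX (negSeq ξ) ε k ω = cus ε k (fun i => -(ξ i ω)) := rfl

lemma beforeS_negSeq (ξ : ℕ → Ω → ℝ) (ε h : ℝ) (n : ℕ) :
    beforeS (negSeq ξ) ε h n = beforeS ξ ε h n := by
  ext ω
  simp only [beforeS, Set.mem_setOf_eq, negSeq_negSeq]
  exact ⟨fun H k h1 h2 => ⟨(H k h1 h2).2, (H k h1 h2).1⟩,
         fun H k h1 h2 => ⟨(H k h1 h2).2, (H k h1 h2).1⟩⟩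

lemma AS_negSeq (ξ : ℕ → Ω → ℝ) (ε h : ℝ) (n : ℕ) :
    AS (negSeq ξ) ε h n = BS ξ ε h n := by
  rw [AS, BS, beforeS_negSeq]

lemma BS_negSeq (ξ : ℕ → Ω → ℝ) (ε h : ℝ) (n : ℕ) :
    BS (negSeq ξ) ε h n = AS ξ ε h n := by
  rw [AS, BS, beforeS_negSeq, negSeq_negSeq]

lemma mem_AS_pos {ξ : ℕ → Ω → ℝ} {ε h : ℝ} {n : ℕ} {ω : Ω} (hh : 0 < h)
    (hω : ω ∈ AS ξ ε h n) : 1 ≤ n := by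
  rcases Nat.eq_zero_or_pos n with rfl | hn
  · exact absurd hω.2 (by simp [Set.mem_setOf_eq, gX_zero]; linarith)
  · exact hn

lemma mem_BS_pos {ξ : ℕ → Ω → ℝ} {ε h : ℝ} {n : ℕ} {ω : Ω} (hh : 0 < h)
    (hω : ω ∈ BS ξ ε h n) : 1 ≤ n :=
  mem_AS_pos (ξ := negSeq ξ) hh (by rwa [AS_negSeq] : ω ∈ AS (negSeq ξ) ε h n)

/-- On `AS n` the hitting time of the plus side equals `n`. -/
lemma hit_eq_on_AS {ξ : ℕ → Ω → ℝ} {ε h : ℝ} {n : ℕ} {ω : Ω} (hh : 0 < h)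
    (hω : ω ∈ AS ξ ε h n) : hitT ξ ε h ω = (n : ℝ≥0∞) := by
  refine le_antisymm (hit_le ξ ε h (mem_AS_pos hh hω) hω.2) ?_
  exact (hit_ge ξ ε h n ω).mpr fun k h1 h2 => (hω.1 k h1 h2).1

/-- At a first minus-side alarm time the plus statistic is strictly below `h`. -/
lemma gx_lt_on_BS {ξ : ℕ → Ω → ℝ} {ε h : ℝ} (hε : 0 ≤ ε) (hh : 0 < h) {n : ℕ} {ω : Ω}
    (hω : ω ∈ BS ξ ε h n) : gX ξ ε n ω < h := by
  have h1 : 1 ≤ n := mem_BS_pos hh hω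
  obtain ⟨m, rfl⟩ : ∃ m, n = m + 1 := ⟨n - 1, by omega⟩
  set u : ℕ → ℝ := fun i => ξ i ω with hu
  have hprevminus : cus ε m (fun i => -u i) < h := by
    rcases Nat.eq_zero_or_pos m with rfl | hm
    · simpa [cus] using hh
    · exact (hω.1 m hm (Nat.lt_succ_self m)).2
  have halarm : h ≤ cus ε (m + 1) (fun i => -u i) := hω.2
  have hkey := cus_other_le ε h hε hprevminus halarm
  simp only [neg_neg] at hkey
  have hprevplus : cus ε m u < h := by
    rcases Nat.eq_zero_or_pos m with rfl | hm
    · simpa [cus] using hh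
    · exact (hω.1 m hm (Nat.lt_succ_self m)).1
  exact lt_of_le_of_lt hkey hprevplus

/-- At a first minus-side alarm time the plus statistic is exactly `0`. -/
lemma gx_zero_on_BS {ξ : ℕ → Ω → ℝ} {ε h : ℝ} (hε : 0 ≤ ε) (hh : 0 < h) {n : ℕ} {ω : Ω}
    (hω : ω ∈ BS ξ ε h n) : gX ξ ε n ω = 0 := by
  have h1 : 1 ≤ n := mem_BS_pos hh hω
  obtain ⟨m, rfl⟩ : ∃ m, n = m + 1 := ⟨n - 1, by omega⟩
  exact cus_zero_at_alarm ε h hε hh (fun k hk1 hk2 => hω.1 k hk1 hk2) hω.2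

lemma hit_gt_on_BS {ξ : ℕ → Ω → ℝ} {ε h : ℝ} (hε : 0 ≤ ε) (hh : 0 < h) {n : ℕ} {ω : Ω}
    (hω : ω ∈ BS ξ ε h n) : (n : ℝ≥0∞) < hitT ξ ε h ω := by
  refine (hit_gt ξ ε h n ω).mpr fun k h1 h2 => ?_
  rcases Nat.lt_or_ge k n with hk | hk
  · exact (hω.1 k h1 hk).1
  · have : k = n := le_antisymm h2 hk
    subst this
    exact gx_lt_on_BS hε hh hω

/-- Restart formula: on `BS n`, exceedance of `n + j` by the plus hitting time
is a condition on the shifted sequence only. -/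
lemma hit_gt_shift_on_BS {ξ : ℕ → Ω → ℝ} {ε h : ℝ} (hε : 0 ≤ ε) (hh : 0 < h) {n : ℕ} {ω : Ω}
    (hω : ω ∈ BS ξ ε h n) (j : ℕ) :
    (((n + j : ℕ) : ℝ≥0∞) < hitT ξ ε h ω ↔
      ∀ k, 1 ≤ k → k ≤ j → cus ε k (fun i => ξ (n + i) ω) < h) := by
  have h0 : gX ξ ε n ω = 0 := gx_zero_on_BS hε hh hω
  have hshift : ∀ k, gX ξ ε (n + k) ω = cus ε k (fun i => ξ (n + i) ω) :=
    cus_shift ε h0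
  rw [hit_gt]
  constructor
  · intro H k h1 h2
    rw [← hshift k]
    exact H (n + k) (by omega) (by omega)
  · intro H k h1 h2
    rcases Nat.lt_or_ge k n with hk | hk
    · exact (hω.1 k h1 hk).1
    · rcases Nat.eq_or_lt_of_le hk with rfl | hk'
      · exact gx_lt_on_BS hε hh hω
      · obtain ⟨k', rfl⟩ : ∃ k', k = n + k' := ⟨k - n, by omega⟩
        rw [hshift k']
        exact H k' (by omega) (by omega)

/-- pairwise disjointness facts -/
lemma AS_disj_BS {ξ : ℕ → Ω → ℝ} {ε h : ℝ} (hε : 0 ≤ ε) (hh : 0 < h) (n m : ℕ) :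
    Disjoint (AS ξ ε h n) (BS ξ ε h m) := by
  rw [Set.disjoint_left]
  intro ω hA hB
  rcases lt_trichotomy n m with hlt | rfl | hgt
  · exact absurd hA.2 (not_le.mpr (hB.1 n (mem_AS_pos hh hA) hlt).1)
  · exact absurd hA.2 (not_le.mpr (gx_lt_on_BS hε hh hB))
  · exact absurd hB.2 (not_le.mpr (hA.1 m (mem_BS_pos hh hB) hgt).2)

lemma AS_disj_AS {ξ : ℕ → Ω → ℝ} {ε h : ℝ} (hh : 0 < h) {n m : ℕ} (hnm : n ≠ m) :
    Disjoint (AS ξ ε h n) (AS ξ ε h m) := by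
  rw [Set.disjoint_left]
  intro ω hA hA'
  rcases Nat.lt_or_ge n m with hlt | hge
  · exact absurd hA.2 (not_le.mpr (hA'.1 n (mem_AS_pos hh hA) hlt).1)
  · have : m < n := by omega
    exact absurd hA'.2 (not_le.mpr (hA.1 m (mem_AS_pos hh hA') this).1)

lemma BS_disj_BS {ξ : ℕ → Ω → ℝ} {ε h : ℝ} (hh : 0 < h) {n m : ℕ} (hnm : n ≠ m) :
    Disjoint (BS ξ ε h n) (BS ξ ε h m) := by
  have := AS_disj_AS (ξ := negSeq ξ) (ε := ε) (h := h) hh hnm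
  rwa [AS_negSeq, AS_negSeq] at this

lemma union_AS_BS_disj {ξ : ℕ → Ω → ℝ} {ε h : ℝ} (hε : 0 ≤ ε) (hh : 0 < h) :
    Pairwise (Function.onFun Disjoint (fun n => AS ξ ε h n ∪ BS ξ ε h n)) := by
  intro n m hnm
  simp only [Function.onFun]
  apply Set.disjoint_union_left.mpr
  constructor
  · apply Set.disjoint_union_right.mpr
    exact ⟨AS_disj_AS hh hnm, AS_disj_BS hε hh n m⟩
  · apply Set.disjoint_union_right.mpr
    refine ⟨(AS_disj_BS hε hh m n).symm, BS_disj_BS hh hnm⟩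

/-- If `ω` is in no `AS n ∪ BS n` then the plus side never alarms. -/
lemma hit_top_of_not_mem {ξ : ℕ → Ω → ℝ} {ε h : ℝ} {ω : Ω}
    (hω : ∀ n, ω ∉ AS ξ ε h n ∪ BS ξ ε h n) : hitT ξ ε h ω = ⊤ := by
  have hbefore : ∀ n, ω ∈ beforeS ξ ε h n := by
    intro n
    induction n with
    | zero => intro k h1 h2; omega
    | succ n ih =>
      intro k h1 h2
      rcases Nat.lt_or_ge k n with hk | hk
      · exact ih k h1 hk
      · have hkn : k = n := by omega
        subst hkn
        have := hω k
        simp only [Set.mem_union, AS, BS, Set.mem_inter_iff, Set.mem_setOf_eq, not_or,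
          not_and] at this
        have hbk := ih
        exact ⟨not_le.mp (this.1 (by exact hbk)), not_le.mp (this.2 (by exact hbk))⟩
  rw [hitT]
  convert (show sInf (∅ : Set ℝ≥0∞) = ⊤ from sInf_empty) using 2
  rw [Set.image_eq_empty]
  ext k
  simp only [Set.mem_setOf_eq, Set.mem_empty_iff_false, iff_false, not_and, not_le]
  intro hk1
  exact ((hbefore (k + 1)) k hk1 (Nat.lt_succ_self k)).1

end Events

section Meas

variable {Ω : Type*} [MeasurableSpace Ω]

lemma measurable_gX (ξ : ℕ → Ω → ℝ) (hm : ∀ i, Measurable (ξ i)) (ε : ℝ) (k : ℕ) :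
    Measurable (gX ξ ε k) :=
  (measurable_cus ε k).comp (measurable_pi_lambda _ hm)

lemma measurable_negSeq {ξ : ℕ → Ω → ℝ} (hm : ∀ i, Measurable (ξ i)) :
    ∀ i, Measurable (negSeq ξ i) := fun i => (hm i).neg

lemma measurableSet_hit_gt (ξ : ℕ → Ω → ℝ) (hm : ∀ i, Measurable (ξ i)) (ε h : ℝ) (m : ℕ) :
    MeasurableSet {ω | (m : ℝ≥0∞) < hitT ξ ε h ω} := by
  have : {ω | (m : ℝ≥0∞) < hitT ξ ε h ω} =
      ⋂ k, ⋂ (_ : 1 ≤ k ∧ k ≤ m), {ω | gX ξ ε k ω < h} := by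
    ext ω
    simp only [Set.mem_setOf_eq, Set.mem_iInter, hit_gt]
    exact ⟨fun H k hk => H k hk.1 hk.2, fun H k h1 h2 => H k ⟨h1, h2⟩⟩
  rw [this]
  exact MeasurableSet.iInter fun k => MeasurableSet.iInter fun _ =>
    measurableSet_lt (measurable_gX ξ hm ε k) measurable_const

lemma measurable_hitT (ξ : ℕ → Ω → ℝ) (hm : ∀ i, Measurable (ξ i)) (ε h : ℝ) :
    Measurable (hitT ξ ε h) := by
  have : hitT ξ ε h = fun ω => ∑' m : ℕ,
      Set.indicator {ω | (m : ℝ≥0∞) < hitT ξ ε h ω} (fun _ => (1 : ℝ≥0∞)) ω := by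
    funext ω
    have : ∀ m : ℕ, Set.indicator {ω | (m : ℝ≥0∞) < hitT ξ ε h ω} (fun _ => (1 : ℝ≥0∞)) ω =
        if (m : ℝ≥0∞) < hitT ξ ε h ω then 1 else 0 := fun m => Set.indicator_apply _ _ _
    rw [tsum_congr this]
    exact (tsum_lt_cast _ (hit_nat_or_top ξ ε h ω)).symm
  rw [this]
  exact Measurable.ennreal_tsum fun m =>
    measurable_const.indicator (measurableSet_hit_gt ξ hm ε h m)

lemma measurableSet_beforeS (ξ : ℕ → Ω → ℝ) (hm : ∀ i, Measurable (ξ i)) (ε h : ℝ) (n : ℕ) :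
    MeasurableSet (beforeS ξ ε h n) := by
  have : beforeS ξ ε h n = ⋂ k, ⋂ (_ : 1 ≤ k ∧ k < n),
      ({ω | gX ξ ε k ω < h} ∩ {ω | gX (negSeq ξ) ε k ω < h}) := by
    ext ω
    simp only [beforeS, Set.mem_setOf_eq, Set.mem_iInter, Set.mem_inter_iff]
    exact ⟨fun H k hk => H k hk.1 hk.2, fun H k h1 h2 => H k ⟨h1, h2⟩⟩
  rw [this]
  exact MeasurableSet.iInter fun k => MeasurableSet.iInter fun _ =>
    (measurableSet_lt (measurable_gX ξ hm ε k) measurable_const).inter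
      (measurableSet_lt (measurable_gX _ (measurable_negSeq hm) ε k) measurable_const)

lemma measurableSet_AS (ξ : ℕ → Ω → ℝ) (hm : ∀ i, Measurable (ξ i)) (ε h : ℝ) (n : ℕ) :
    MeasurableSet (AS ξ ε h n) :=
  (measurableSet_beforeS ξ hm ε h n).inter
    (measurableSet_le measurable_const (measurable_gX ξ hm ε n))

lemma measurableSet_BS (ξ : ℕ → Ω → ℝ) (hm : ∀ i, Measurable (ξ i)) (ε h : ℝ) (n : ℕ) :
    MeasurableSet (BS ξ ε h n) :=
  (measurableSet_beforeS ξ hm ε h n).inter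
    (measurableSet_le measurable_const (measurable_gX _ (measurable_negSeq hm) ε n))

end Meas

section Tuples

variable {Ω : Type*} [MeasurableSpace Ω]

def blockF (ξ : ℕ → Ω → ℝ) (n j : ℕ) : Ω → (Fin j → ℝ) := fun ω i => ξ (n + i) ω

def extF (j : ℕ) (w : Fin j → ℝ) : ℕ → ℝ := fun i => if hi : i < j then w ⟨i, hi⟩ else 0

def setE (ε h : ℝ) (j : ℕ) : Set (Fin j → ℝ) :=
  {w | ∀ k, 1 ≤ k → k ≤ j → cus ε k (extF j w) < h}

lemma measurable_blockF (ξ : ℕ → Ω → ℝ) (hm : ∀ i, Measurable (ξ i)) (n j : ℕ) :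
    Measurable (blockF ξ n j) :=
  measurable_pi_lambda _ fun i => hm (n + i)

lemma measurable_extF (j : ℕ) : Measurable (extF j) := by
  apply measurable_pi_lambda
  intro i
  by_cases hi : i < j
  · simp only [extF, dif_pos hi]
    exact measurable_pi_apply _
  · simp only [extF, dif_neg hi]
    exact measurable_const

lemma measurableSet_setE (ε h : ℝ) (j : ℕ) : MeasurableSet (setE ε h j) := by
  have : setE ε h j = ⋂ k, ⋂ (_ : 1 ≤ k ∧ k ≤ j),
      {w | cus ε k (extF j w) < h} := by
    ext w
    simp only [setE, Set.mem_setOf_eq, Set.mem_iInter]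
    exact ⟨fun H k hk => H k hk.1 hk.2, fun H k h1 h2 => H k ⟨h1, h2⟩⟩
  rw [this]
  exact MeasurableSet.iInter fun k => MeasurableSet.iInter fun _ =>
    measurableSet_lt ((measurable_cus ε k).comp (measurable_extF j)) measurable_const

lemma blockF_preimage_setE (ξ : ℕ → Ω → ℝ) (ε h : ℝ) (n j : ℕ) :
    blockF ξ n j ⁻¹' setE ε h j =
      {ω | ∀ k, 1 ≤ k → k ≤ j → cus ε k (fun i => ξ (n + i) ω) < h} := by
  ext ω
  simp only [Set.mem_preimage, setE, Set.mem_setOf_eq]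
  refine forall_congr' fun k => forall_congr' fun h1 => forall_congr' fun h2 => ?_
  rw [cus_congr ε (u := extF j (blockF ξ n j ω)) (v := fun i => ξ (n + i) ω)
    (fun i hi => by
      have hij : i < j := lt_of_lt_of_le hi h2
      simp only [extF, blockF, dif_pos hij])]

def tupR (ξ : ℕ → Ω → ℝ) (n : ℕ) : Ω → (↥(Finset.range n) → ℝ) :=
  fun ω i => ξ i ω

def extR (n : ℕ) (v : ↥(Finset.range n) → ℝ) : ℕ → ℝ :=
  fun i => if hi : i ∈ Finset.range n then v ⟨i, hi⟩ else 0

def setB (ε h : ℝ) (n : ℕ) : Set (↥(Finset.range n) → ℝ) :=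
  {v | (∀ k, 1 ≤ k → k < n →
      cus ε k (extR n v) < h ∧ cus ε k (fun i => -extR n v i) < h) ∧
    h ≤ cus ε n (fun i => -extR n v i)}

lemma measurable_tupR (ξ : ℕ → Ω → ℝ) (hm : ∀ i, Measurable (ξ i)) (n : ℕ) :
    Measurable (tupR ξ n) :=
  measurable_pi_lambda _ fun i => hm i

lemma measurable_extR (n : ℕ) : Measurable (extR n) := by
  apply measurable_pi_lambda
  intro i
  by_cases hi : i ∈ Finset.range n
  · simp only [extR, dif_pos hi]
    exact measurable_pi_apply _
  · simp only [extR, dif_neg hi]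
    exact measurable_const

lemma measurableSet_setB (ε h : ℝ) (n : ℕ) : MeasurableSet (setB ε h n) := by
  have : setB ε h n = (⋂ k, ⋂ (_ : 1 ≤ k ∧ k < n),
      ({v | cus ε k (extR n v) < h} ∩ {v | cus ε k (fun i => -extR n v i) < h})) ∩
      {v | h ≤ cus ε n (fun i => -extR n v i)} := by
    ext v
    simp only [setB, Set.mem_setOf_eq, Set.mem_inter_iff, Set.mem_iInter]
    exact ⟨fun H => ⟨fun k hk => H.1 k hk.1 hk.2, H.2⟩,
           fun H => ⟨fun k h1 h2 => H.1 k ⟨h1, h2⟩, H.2⟩⟩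
  rw [this]
  have hnegext : ∀ k : ℕ, Measurable fun v : ↥(Finset.range n) → ℝ =>
      cus ε k (fun i => -extR n v i) := by
    intro k
    exact (measurable_cus ε k).comp ((measurable_extR n).neg.comp measurable_id) |>.comp
      measurable_id
  refine MeasurableSet.inter ?_ (measurableSet_le measurable_const (hnegext n))
  exact MeasurableSet.iInter fun k => MeasurableSet.iInter fun _ =>
    (measurableSet_lt ((measurable_cus ε k).comp (measurable_extR n)) measurable_const).inter
      (measurableSet_lt (hnegext k) measurable_const)

lemma tupR_preimage_setB (ξ : ℕ → Ω → ℝ) (ε h : ℝ) (n : ℕ) :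
    tupR ξ n ⁻¹' setB ε h n = BS ξ ε h n := by
  ext ω
  have hext : ∀ k ≤ n, cus ε k (extR n (tupR ξ n ω)) = gX ξ ε k ω := by
    intro k hk
    exact cus_congr ε fun i hi => by
      have : i ∈ Finset.range n := Finset.mem_range.mpr (lt_of_lt_of_le hi hk)
      simp only [extR, tupR, dif_pos this]
  have hextneg : ∀ k ≤ n, cus ε k (fun i => -extR n (tupR ξ n ω) i) =
      gX (negSeq ξ) ε k ω := by
    intro k hk
    exact cus_congr ε fun i hi => by
      have : i ∈ Finset.range n := Finset.mem_range.mpr (lt_of_lt_of_le hi hk)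
      simp only [extR, tupR, dif_pos this, negSeq]
  simp only [Set.mem_preimage, setB, Set.mem_setOf_eq, BS, beforeS, Set.mem_inter_iff]
  constructor
  · rintro ⟨H1, H2⟩
    refine ⟨fun k h1 h2 => ?_, ?_⟩
    · have := H1 k h1 h2
      rwa [hext k (by omega), hextneg k (by omega)] at this
    · rwa [hextneg n le_rfl] at H2
  · rintro ⟨H1, H2⟩
    refine ⟨fun k h1 h2 => ?_, ?_⟩
    · have := H1 k h1 h2
      rwa [hext k (by omega), hextneg k (by omega)]
    · rwa [hextneg n le_rfl]

end Tuples

section Law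

variable {Ω : Type*} [MeasurableSpace Ω] {μ : Measure Ω} [IsProbabilityMeasure μ]

lemma block_map_pi (ξ : ℕ → Ω → ℝ) (hm : ∀ i, Measurable (ξ i))
    (hind : iIndepFun ξ μ)
    (hid : ∀ k, IdentDistrib (ξ k) (ξ 0) μ μ) (n j : ℕ) :
    Measure.map (blockF ξ n j) μ = Measure.pi (fun _ : Fin j => Measure.map (ξ 0) μ) := by
  haveI : IsProbabilityMeasure (Measure.map (ξ 0) μ) :=
    Measure.isProbabilityMeasure_map (hm 0).aemeasurable
  refine (Measure.pi_eq fun s hs => ?_).symm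
  rw [Measure.map_apply (measurable_blockF ξ hm n j) (MeasurableSet.univ_pi hs)]
  set sets : ℕ → Set ℝ := fun i => if hi : i - n < j then s ⟨i - n, hi⟩ else Set.univ
    with hsets
  have hmeas_sets : ∀ i, MeasurableSet (sets i) := by
    intro i
    by_cases hi : i - n < j
    · simp only [hsets, dif_pos hi]; exact hs _
    · simp only [hsets, dif_neg hi]; exact MeasurableSet.univ
  have hpre : blockF ξ n j ⁻¹' Set.pi Set.univ s =
      ⋂ i ∈ Finset.image (fun m => n + m) (Finset.range j), ξ i ⁻¹' sets i := by
    ext ω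
    simp only [Set.mem_preimage, Set.mem_pi, Set.mem_univ, forall_true_left, Set.mem_iInter,
      Finset.mem_image, Finset.mem_range, blockF]
    constructor
    · rintro H i ⟨m, hm', rfl⟩
      have he : (n + m) - n = m := by omega
      simp only [hsets, he, dif_pos hm']
      exact H ⟨m, hm'⟩
    · intro H i
      have := H (n + (i : ℕ)) ⟨(i : ℕ), i.2, rfl⟩
      have he : (n + (i : ℕ)) - n = (i : ℕ) := by omega
      simp only [hsets, he, dif_pos i.2] at this
      simpa using this
  rw [hpre, hind.measure_inter_preimage_eq_mul _ (fun i _ => hmeas_sets i),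
    Finset.prod_image (by intro a _ b _ hab; simp only at hab; omega)]
  rw [← Fin.prod_univ_eq_prod_range (fun m => μ (ξ (n + m) ⁻¹' sets (n + m))) j]
  refine Finset.prod_congr rfl fun i _ => ?_
  have he : sets (n + (i : ℕ)) = s i := by
    have he' : (n + (i : ℕ)) - n = (i : ℕ) := by omega
    simp only [hsets, he', dif_pos i.2, Fin.eta]
  rw [he, ← Measure.map_apply (hm _) (hs i), (hid (n + (i : ℕ))).map_eq]

lemma measure_blockE (ξ : ℕ → Ω → ℝ) (hm : ∀ i, Measurable (ξ i))
    (hind : iIndepFun ξ μ)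
    (hid : ∀ k, IdentDistrib (ξ k) (ξ 0) μ μ) (ε h : ℝ) (n j : ℕ) :
    μ (blockF ξ n j ⁻¹' setE ε h j) = μ {ω | (j : ℝ≥0∞) < hitT ξ ε h ω} := by
  have h1 : μ (blockF ξ n j ⁻¹' setE ε h j) = μ (blockF ξ 0 j ⁻¹' setE ε h j) := by
    rw [← Measure.map_apply (measurable_blockF ξ hm n j) (measurableSet_setE ε h j),
      ← Measure.map_apply (measurable_blockF ξ hm 0 j) (measurableSet_setE ε h j),
      block_map_pi ξ hm hind hid n j, block_map_pi ξ hm hind hid 0 j]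
  rw [h1, blockF_preimage_setE]
  congr 1
  ext ω
  simp only [Set.mem_setOf_eq, hit_gt]
  refine forall_congr' fun k => forall_congr' fun h1 => forall_congr' fun h2 => ?_
  rw [show (fun i => ξ (0 + i) ω) = fun i => ξ i ω from funext fun i => by rw [Nat.zero_add]]
  rfl

lemma measure_BS_inter_E (ξ : ℕ → Ω → ℝ) (hm : ∀ i, Measurable (ξ i))
    (hind : iIndepFun ξ μ)
    (hid : ∀ k, IdentDistrib (ξ k) (ξ 0) μ μ) (ε h : ℝ) (n j : ℕ) :
    μ (BS ξ ε h n ∩ blockF ξ n j ⁻¹' setE ε h j) =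
      μ (BS ξ ε h n) * μ {ω | (j : ℝ≥0∞) < hitT ξ ε h ω} := by
  have hIF : IndepFun (tupR ξ n) (blockF ξ n j) μ := by
    have hd : Disjoint (Finset.range n) (Finset.Ico n (n + j)) := by
      rw [Finset.disjoint_left]
      intro a ha hb
      rw [Finset.mem_range] at ha
      rw [Finset.mem_Ico] at hb
      omega
    have h1 := hind.indepFun_finset (Finset.range n) (Finset.Ico n (n + j)) hd hm
    have hr : Measurable (fun v : ↥(Finset.Ico n (n + j)) → ℝ =>
        (fun i : Fin j => v ⟨n + (i : ℕ), by rw [Finset.mem_Ico]; omega⟩)) :=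
      measurable_pi_lambda _ fun i => measurable_pi_apply _
    exact h1.comp measurable_id hr
  rw [← tupR_preimage_setB ξ ε h n,
    hIF.measure_inter_preimage_eq_mul _ _ (measurableSet_setB ε h n) (measurableSet_setE ε h j),
    tupR_preimage_setB ξ ε h n, measure_blockE ξ hm hind hid ε h n j]

end Law

section Master

lemma tsum_shift_split (a : ℕ → ℝ≥0∞) (n : ℕ) :
    ∑' m : ℕ, a m = (∑ m ∈ Finset.range n, a m) + ∑' j : ℕ, a (j + n) := by
  induction n with
  | zero => simp
  | succ n ih =>
    rw [ih, Finset.sum_range_succ]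
    have hstep : ∑' j : ℕ, a (j + n) = a n + ∑' j : ℕ, a (j + (n + 1)) := by
      have := tsum_eq_zero_add' (f := fun j => a (j + n)) ENNReal.summable
      simp only [Nat.zero_add] at this
      rw [this]
      congr 1
      exact tsum_congr fun b => by rw [show b + 1 + n = b + (n + 1) by omega]
    rw [hstep, ← add_assoc]

variable {Ω : Type*} [MeasurableSpace Ω] {μ : Measure Ω} [IsProbabilityMeasure μ]

lemma compl_union_null (ξ : ℕ → Ω → ℝ) (hm : ∀ i, Measurable (ξ i)) (ε h : ℝ)
    (hfin : ∫⁻ ω, hitT ξ ε h ω ∂μ ≠ ⊤) :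
    μ (⋃ n, (AS ξ ε h n ∪ BS ξ ε h n))ᶜ = 0 := by
  have hae := ae_lt_top (measurable_hitT ξ hm ε h) hfin
  rw [ae_iff] at hae
  refine measure_mono_null ?_ hae
  intro ω hω
  simp only [Set.mem_compl_iff, Set.mem_iUnion, not_exists] at hω
  simp only [Set.mem_setOf_eq, not_lt, top_le_iff]
  exact hit_top_of_not_mem hω

lemma lintegral_hit_AS (ξ : ℕ → Ω → ℝ) (hm : ∀ i, Measurable (ξ i)) {ε h : ℝ}
    (hh : 0 < h) (n : ℕ) :
    ∫⁻ ω in AS ξ ε h n, hitT ξ ε h ω ∂μ = n * μ (AS ξ ε h n) := by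
  have hae : ∀ᵐ ω ∂(μ.restrict (AS ξ ε h n)), hitT ξ ε h ω = (n : ℝ≥0∞) :=
    (ae_restrict_iff' (measurableSet_AS ξ hm ε h n)).2
      (Filter.Eventually.of_forall fun ω hω => hit_eq_on_AS hh hω)
  rw [lintegral_congr_ae hae, setLIntegral_const]

set_option maxHeartbeats 1000000 in
lemma lintegral_hit_BS (ξ : ℕ → Ω → ℝ) (hm : ∀ i, Measurable (ξ i))
    (hind : iIndepFun ξ μ)
    (hid : ∀ k, IdentDistrib (ξ k) (ξ 0) μ μ) {ε h : ℝ}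
    (hε : 0 ≤ ε) (hh : 0 < h) (n : ℕ) :
    ∫⁻ ω in BS ξ ε h n, hitT ξ ε h ω ∂μ =
      n * μ (BS ξ ε h n) + μ (BS ξ ε h n) * ∫⁻ ω, hitT ξ ε h ω ∂μ := by
  rw [lintegral_nat_valued (μ.restrict (BS ξ ε h n)) _ (hit_nat_or_top ξ ε h)
    (measurableSet_hit_gt ξ hm ε h)]
  have hres : ∀ m : ℕ, (μ.restrict (BS ξ ε h n)) {ω | (m : ℝ≥0∞) < hitT ξ ε h ω} =
      μ ({ω | (m : ℝ≥0∞) < hitT ξ ε h ω} ∩ BS ξ ε h n) := fun m =>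
    Measure.restrict_apply (measurableSet_hit_gt ξ hm ε h m)
  simp only [hres]
  have hsplit : ∑' m : ℕ, μ ({ω | (m : ℝ≥0∞) < hitT ξ ε h ω} ∩ BS ξ ε h n) =
      (∑ m ∈ Finset.range n, μ ({ω | (m : ℝ≥0∞) < hitT ξ ε h ω} ∩ BS ξ ε h n)) +
      ∑' j : ℕ, μ ({ω | ((j + n : ℕ) : ℝ≥0∞) < hitT ξ ε h ω} ∩ BS ξ ε h n) := by
    exact tsum_shift_split _ n
  rw [hsplit]
  congr 1
  · -- head: each term equals μ (BS n)
    have hterm : ∀ m ∈ Finset.range n,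
        μ ({ω | (m : ℝ≥0∞) < hitT ξ ε h ω} ∩ BS ξ ε h n) = μ (BS ξ ε h n) := by
      intro m hmem
      rw [Finset.mem_range] at hmem
      congr 1
      rw [Set.inter_eq_self_of_subset_right]
      intro ω hω
      have h1 : ((m : ℝ≥0∞)) < (n : ℝ≥0∞) := by exact_mod_cast hmem
      exact h1.trans (hit_gt_on_BS hε hh hω)
    rw [Finset.sum_congr rfl hterm]
    simp [Finset.card_range, mul_comm]
  · -- tail
    have hterm : ∀ j : ℕ,
        μ ({ω | ((j + n : ℕ) : ℝ≥0∞) < hitT ξ ε h ω} ∩ BS ξ ε h n) =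
          μ (BS ξ ε h n) * μ {ω | (j : ℝ≥0∞) < hitT ξ ε h ω} := by
      intro j
      have hsw : {ω | ((j + n : ℕ) : ℝ≥0∞) < hitT ξ ε h ω} =
          {ω | ((n + j : ℕ) : ℝ≥0∞) < hitT ξ ε h ω} := by rw [Nat.add_comm]
      rw [hsw, ← measure_BS_inter_E ξ hm hind hid ε h n j]
      congr 1
      ext ω
      simp only [Set.mem_inter_iff, Set.mem_setOf_eq, blockF_preimage_setE]
      constructor
      · rintro ⟨h1, h2⟩
        exact ⟨h2, (hit_gt_shift_on_BS hε hh h2 j).mp h1⟩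
      · rintro ⟨h2, h1⟩
        exact ⟨(hit_gt_shift_on_BS hε hh h2 j).mpr h1, h2⟩
    rw [tsum_congr hterm, ENNReal.tsum_mul_left]
    congr 1
    rw [lintegral_nat_valued μ _ (hit_nat_or_top ξ ε h) (measurableSet_hit_gt ξ hm ε h)]

/-- Master renewal identity for the plus-side hitting time. -/
lemma master (ξ : ℕ → Ω → ℝ) (hm : ∀ i, Measurable (ξ i))
    (hind : iIndepFun ξ μ)
    (hid : ∀ k, IdentDistrib (ξ k) (ξ 0) μ μ) {ε h : ℝ}
    (hε : 0 ≤ ε) (hh : 0 < h)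
    (hfin : ∫⁻ ω, hitT ξ ε h ω ∂μ ≠ ⊤) :
    ∫⁻ ω, hitT ξ ε h ω ∂μ =
      (∑' n : ℕ, n * μ (AS ξ ε h n ∪ BS ξ ε h n)) +
        (∑' n : ℕ, μ (BS ξ ε h n)) * ∫⁻ ω, hitT ξ ε h ω ∂μ := by
  have hmU : ∀ n : ℕ, MeasurableSet (AS ξ ε h n ∪ BS ξ ε h n) := fun n =>
    (measurableSet_AS ξ hm ε h n).union (measurableSet_BS ξ hm ε h n)
  have step1 : ∫⁻ ω, hitT ξ ε h ω ∂μ =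
      ∫⁻ ω in ⋃ n, (AS ξ ε h n ∪ BS ξ ε h n), hitT ξ ε h ω ∂μ := by
    rw [← lintegral_add_compl (hitT ξ ε h) (MeasurableSet.iUnion hmU),
      setLIntegral_measure_zero _ _ (compl_union_null ξ hm ε h hfin), add_zero]
  have step3 : ∀ n : ℕ, ∫⁻ ω in AS ξ ε h n ∪ BS ξ ε h n, hitT ξ ε h ω ∂μ =
      n * μ (AS ξ ε h n ∪ BS ξ ε h n) +
        μ (BS ξ ε h n) * ∫⁻ ω, hitT ξ ε h ω ∂μ := by
    intro n
    rw [lintegral_union (measurableSet_BS ξ hm ε h n) (AS_disj_BS hε hh n n),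
      lintegral_hit_AS ξ hm hh n, lintegral_hit_BS ξ hm hind hid hε hh n,
      measure_union (AS_disj_BS hε hh n n) (measurableSet_BS ξ hm ε h n), mul_add,
      ← add_assoc]
  calc ∫⁻ ω, hitT ξ ε h ω ∂μ
      = ∫⁻ ω in ⋃ n, (AS ξ ε h n ∪ BS ξ ε h n), hitT ξ ε h ω ∂μ := step1
    _ = ∑' n : ℕ, ∫⁻ ω in AS ξ ε h n ∪ BS ξ ε h n, hitT ξ ε h ω ∂μ :=
        lintegral_iUnion hmU (union_AS_BS_disj hε hh) _
    _ = ∑' n : ℕ, ((n : ℝ≥0∞) * μ (AS ξ ε h n ∪ BS ξ ε h n) +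
          μ (BS ξ ε h n) * ∫⁻ ω, hitT ξ ε h ω ∂μ) := tsum_congr step3
    _ = _ := by rw [ENNReal.tsum_add, ENNReal.tsum_mul_right]

/-- The two-sided run length integral. -/
lemma master_min (ξ : ℕ → Ω → ℝ) (hm : ∀ i, Measurable (ξ i)) {ε h : ℝ}
    (hε : 0 ≤ ε) (hh : 0 < h)
    (hfin : ∫⁻ ω, hitT ξ ε h ω ∂μ ≠ ⊤) :
    ∫⁻ ω, min (hitT ξ ε h ω) (hitT (negSeq ξ) ε h ω) ∂μ =
      ∑' n : ℕ, n * μ (AS ξ ε h n ∪ BS ξ ε h n) := by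
  have hmU : ∀ n : ℕ, MeasurableSet (AS ξ ε h n ∪ BS ξ ε h n) := fun n =>
    (measurableSet_AS ξ hm ε h n).union (measurableSet_BS ξ hm ε h n)
  set f : Ω → ℝ≥0∞ := fun ω => min (hitT ξ ε h ω) (hitT (negSeq ξ) ε h ω) with hf
  have step1 : ∫⁻ ω, f ω ∂μ =
      ∫⁻ ω in ⋃ n, (AS ξ ε h n ∪ BS ξ ε h n), f ω ∂μ := by
    rw [← lintegral_add_compl f (MeasurableSet.iUnion hmU),
      setLIntegral_measure_zero _ _ (compl_union_null ξ hm ε h hfin), add_zero]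
  have hmin_eq : ∀ n : ℕ, ∀ ω ∈ AS ξ ε h n ∪ BS ξ ε h n, f ω = (n : ℝ≥0∞) := by
    intro n ω hω
    have hge1 : ((n : ℝ≥0∞)) ≤ hitT ξ ε h ω := by
      refine (hit_ge ξ ε h n ω).mpr fun k h1 h2 => ?_
      rcases hω with hA | hB
      · exact (hA.1 k h1 h2).1
      · exact (hB.1 k h1 h2).1
    have hge2 : ((n : ℝ≥0∞)) ≤ hitT (negSeq ξ) ε h ω := by
      refine (hit_ge (negSeq ξ) ε h n ω).mpr fun k h1 h2 => ?_
      rcases hω with hA | hB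
      · exact (hA.1 k h1 h2).2
      · exact (hB.1 k h1 h2).2
    have hle : f ω ≤ (n : ℝ≥0∞) := by
      rcases hω with hA | hB
      · exact le_trans (min_le_left _ _) (le_of_eq (hit_eq_on_AS hh hA))
      · exact le_trans (min_le_right _ _) (hit_le (negSeq ξ) ε h (mem_BS_pos hh hB) hB.2)
    exact le_antisymm hle (le_min hge1 hge2)
  rw [step1, lintegral_iUnion hmU (union_AS_BS_disj hε hh)]
  refine tsum_congr fun n => ?_
  have hae : ∀ᵐ ω ∂(μ.restrict (AS ξ ε h n ∪ BS ξ ε h n)), f ω = (n : ℝ≥0∞) :=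
    (ae_restrict_iff' (hmU n)).2 (Filter.Eventually.of_forall (hmin_eq n))
  rw [lintegral_congr_ae hae, setLIntegral_const]

end Master

end CusumAux

open CusumAux in
/-- **Two-sided CUSUM average-run-length identity** (Lemma 3, Khan).  Here `η k`
(for `k : ℕ`) stands for `η_{k+1}`, so that `gp k` and `gm k` are the upper and
lower CUSUM statistics `g_k⁺` and `g_k⁻`.  The hitting times take values in
`ℝ≥0∞`, with `⊤` meaning that the threshold is never reached. -/
theorem two_sided_cusum_arl_identity
    {Ω : Type*} [MeasurableSpace Ω] {μ : Measure Ω} [IsProbabilityMeasure μ]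
    (η : ℕ → Ω → ℝ) (hmeas : ∀ k, Measurable (η k))
    (hindep : iIndepFun η μ)
    (hident : ∀ k, IdentDistrib (η k) (η 0) μ μ)
    (ε : ℝ) (hε : 0 ≤ ε) (h : ℝ) (hh : 0 < h)
    (gp gm : ℕ → Ω → ℝ)
    (hgp0 : ∀ ω, gp 0 ω = 0) (hgm0 : ∀ ω, gm 0 ω = 0)
    (hgp : ∀ k ω, gp (k + 1) ω = max 0 (gp k ω + (η k ω - ε)))
    (hgm : ∀ k ω, gm (k + 1) ω = max 0 (gm k ω + (-(η k ω) - ε)))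
    (Hp Hm H : Ω → ℝ≥0∞)
    (hHp : ∀ ω, Hp ω = sInf ((fun n : ℕ => (n : ℝ≥0∞)) '' {k : ℕ | 1 ≤ k ∧ h ≤ gp k ω}))
    (hHm : ∀ ω, Hm ω = sInf ((fun n : ℕ => (n : ℝ≥0∞)) '' {k : ℕ | 1 ≤ k ∧ h ≤ gm k ω}))
    (hH : ∀ ω, H ω = min (Hp ω) (Hm ω))
    (hp_pos : 0 < ∫⁻ ω, Hp ω ∂μ) (hp_fin : ∫⁻ ω, Hp ω ∂μ < ⊤)
    (hm_pos : 0 < ∫⁻ ω, Hm ω ∂μ) (hm_fin : ∫⁻ ω, Hm ω ∂μ < ⊤) :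
    (∫⁻ ω, H ω ∂μ)⁻¹ = (∫⁻ ω, Hp ω ∂μ)⁻¹ + (∫⁻ ω, Hm ω ∂μ)⁻¹ := by
  -- identify the processes with the abstract CUSUM machinery
  have hgx : ∀ k ω, gp k ω = gX η ε k ω := by
    intro k
    induction k with
    | zero => intro ω; rw [hgp0 ω]; rfl
    | succ k ih =>
      intro ω
      rw [hgp k ω, ih ω]
      rfl
  have hgm' : ∀ k ω, gm k ω = gX (negSeq η) ε k ω := by
    intro k
    induction k with
    | zero => intro ω; rw [hgm0 ω]; rfl
    | succ k ih =>
      intro ω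
      rw [hgm k ω, ih ω]
      rfl
  have hHp' : ∀ ω, Hp ω = hitT η ε h ω := by
    intro ω
    have hset : {k : ℕ | 1 ≤ k ∧ h ≤ gp k ω} = {k : ℕ | 1 ≤ k ∧ h ≤ gX η ε k ω} := by
      ext k
      rw [Set.mem_setOf_eq, Set.mem_setOf_eq, hgx k ω]
    rw [hHp ω, hset]
    rfl
  have hHm' : ∀ ω, Hm ω = hitT (negSeq η) ε h ω := by
    intro ω
    have hset : {k : ℕ | 1 ≤ k ∧ h ≤ gm k ω} = {k : ℕ | 1 ≤ k ∧ h ≤ gX (negSeq η) ε k ω} := by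
      ext k
      rw [Set.mem_setOf_eq, Set.mem_setOf_eq, hgm' k ω]
    rw [hHm ω, hset]
    rfl
  have hH' : ∀ ω, H ω = min (hitT η ε h ω) (hitT (negSeq η) ε h ω) := by
    intro ω
    rw [hH ω, hHp' ω, hHm' ω]
  have eP : ∫⁻ ω, Hp ω ∂μ = ∫⁻ ω, hitT η ε h ω ∂μ := lintegral_congr hHp'
  have eM : ∫⁻ ω, Hm ω ∂μ = ∫⁻ ω, hitT (negSeq η) ε h ω ∂μ := lintegral_congr hHm'
  have eH : ∫⁻ ω, H ω ∂μ =
      ∫⁻ ω, min (hitT η ε h ω) (hitT (negSeq η) ε h ω) ∂μ := lintegral_congr hH'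
  rw [eP, eM, eH]
  rw [eP] at hp_pos hp_fin
  rw [eM] at hm_pos hm_fin
  set P := ∫⁻ ω, hitT η ε h ω ∂μ with hPdef
  set M := ∫⁻ ω, hitT (negSeq η) ε h ω ∂μ with hMdef
  have hPtop : P ≠ ⊤ := hp_fin.ne
  have hMtop : M ≠ ⊤ := hm_fin.ne
  -- hypotheses for the negated sequence
  have hm2 : ∀ i, Measurable (negSeq η i) := measurable_negSeq hmeas
  have hind2 : iIndepFun (negSeq η) μ :=
    hindep.comp (fun _ => fun x : ℝ => -x) (fun _ => measurable_neg)
  have hid2 : ∀ k, IdentDistrib (negSeq η k) (negSeq η 0) μ μ := fun k =>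
    (hident k).comp measurable_neg
  set EN := ∑' n : ℕ, (n : ℝ≥0∞) * μ (AS η ε h n ∪ BS η ε h n) with hENdef
  set p := ∑' n : ℕ, μ (AS η ε h n) with hpdef
  set q := ∑' n : ℕ, μ (BS η ε h n) with hqdef
  have master1 : P = EN + q * P := master η hmeas hindep hident hε hh hPtop
  have master2 : M = EN + p * M := by
    have := master (negSeq η) hm2 hind2 hid2 hε hh hMtop
    simpa only [AS_negSeq, BS_negSeq, Set.union_comm (BS η ε h _) (AS η ε h _)] using this
  have masterH : ∫⁻ ω, min (hitT η ε h ω) (hitT (negSeq η) ε h ω) ∂μ = EN :=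
    master_min η hmeas hε hh hPtop
  rw [masterH]
  -- p + q = 1
  have hpq : p + q = 1 := by
    have hmU : ∀ n : ℕ, MeasurableSet (AS η ε h n ∪ BS η ε h n) := fun n =>
      (measurableSet_AS η hmeas ε h n).union (measurableSet_BS η hmeas ε h n)
    have hU1 : μ (⋃ n, (AS η ε h n ∪ BS η ε h n)) = 1 := by
      have hc := compl_union_null η hmeas ε h hPtop
      have := measure_add_measure_compl (μ := μ) (MeasurableSet.iUnion hmU)
      rw [hc, add_zero, measure_univ] at this
      exact this
    have hUdis := measure_iUnion (μ := μ) (union_AS_BS_disj (ξ := η) hε hh) hmU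
    rw [hUdis] at hU1
    rw [← hU1, hpdef, hqdef, ← ENNReal.tsum_add]
    exact tsum_congr fun n =>
      (measure_union (AS_disj_BS hε hh n n) (measurableSet_BS η hmeas ε h n)).symm
  -- basic bounds
  have hq_ne_top : q ≠ ⊤ := by
    intro hq
    rw [hq] at hpq
    simp at hpq
  have hp_ne_top : p ≠ ⊤ := by
    intro hp
    rw [hp] at hpq
    simp at hpq
  have hEN_pos : EN ≠ 0 := by
    have h1 : (1 : ℝ≥0∞) ≤ ∫⁻ ω, min (hitT η ε h ω) (hitT (negSeq η) ε h ω) ∂μ := by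
      have : ∫⁻ _, (1 : ℝ≥0∞) ∂μ = 1 := by simp
      rw [← this]
      exact lintegral_mono fun ω => le_min (hit_one_le η ε h ω) (hit_one_le (negSeq η) ε h ω)
    rw [masterH] at h1
    intro h0
    rw [h0] at h1
    simp at h1
  have hEN_top : EN ≠ ⊤ := by
    intro htop
    rw [htop] at master1
    simp [top_add] at master1
    exact hPtop master1
  -- EN = p * P and EN = q * M
  have hqP_top : q * P ≠ ⊤ := ENNReal.mul_ne_top hq_ne_top hPtop
  have hpM_top : p * M ≠ ⊤ := ENNReal.mul_ne_top hp_ne_top hMtop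
  have hp_eq : p = 1 - q := by
    rw [← hpq]
    rw [ENNReal.add_sub_cancel_right hq_ne_top]
  have hq_eq : q = 1 - p := by
    rw [← hpq]
    rw [ENNReal.add_sub_cancel_left hp_ne_top]
  have hENP : EN = p * P := by
    have h1 : EN = P - q * P := ENNReal.eq_sub_of_add_eq hqP_top master1.symm
    rw [h1, hp_eq, ENNReal.sub_mul (fun _ _ => hPtop), one_mul]
  have hENM : EN = q * M := by
    have h1 : EN = M - p * M := ENNReal.eq_sub_of_add_eq hpM_top master2.symm
    rw [h1, hq_eq, ENNReal.sub_mul (fun _ _ => hMtop), one_mul]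
  have hp_ne_zero : p ≠ 0 := by
    intro h0
    rw [h0, zero_mul] at hENP
    exact hEN_pos hENP
  have hq_ne_zero : q ≠ 0 := by
    intro h0
    rw [h0, zero_mul] at hENM
    exact hEN_pos hENM
  -- invert
  have hPinv : P⁻¹ = p * EN⁻¹ := by
    rw [hENP, ENNReal.mul_inv (Or.inl hp_ne_zero) (Or.inl hp_ne_top), ← mul_assoc,
      ENNReal.mul_inv_cancel hp_ne_zero hp_ne_top, one_mul]
  have hMinv : M⁻¹ = q * EN⁻¹ := by
    rw [hENM, ENNReal.mul_inv (Or.inl hq_ne_zero) (Or.inl hq_ne_top), ← mul_assoc,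
      ENNReal.mul_inv_cancel hq_ne_zero hq_ne_top, one_mul]
  rw [hPinv, hMinv, ← add_mul, hpq, one_mul]
end

section
/- Let (y_k)_{k≥1} be i.i.d. random variables taking values in [0,1] with common mean u₀, let c ∈ ℝ, ε > 0 and h > 0 with |c − u₀| < ε. Suppose there exist r⁻ > 0 with E[exp(r⁻·(c − y_1 − ε))] = 1 and r⁺ > 0 with E[exp(r⁺·(y_1 − c − ε))] = 1, and set r = min(r⁻, r⁺). Then the alarm time H of the two-sided CUSUM procedure with reference c satisfies E[H] ≥ exp(r·h)/2; consequently, for any horizon T the expected number of false alarms raised by repeatedly restarting the procedure within T observations is at most 2T/exp(r·h). -/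
open MeasureTheory ProbabilityTheory
open scoped ENNReal

/-- Upper CUSUM statistic `g_k⁺` with reference `c` and tolerance `ε`, driven by the
observation sequence `x` (where `x k` is the `(k+1)`-st observation `y_{k+1}`). -/
def gPlus (c ε : ℝ) (x : ℕ → ℝ) : ℕ → ℝ
  | 0 => 0
  | k + 1 => max 0 (gPlus c ε x k + (x k - c - ε))

/-- Lower CUSUM statistic `g_k⁻`. -/
def gMinus (c ε : ℝ) (x : ℕ → ℝ) : ℕ → ℝ
  | 0 => 0
  | k + 1 => max 0 (gMinus c ε x k + (c - x k - ε))

/-- Alarm time `H = inf {k ≥ 1 : g_k⁺ ≥ h or g_k⁻ ≥ h}` of the two-sided CUSUM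
procedure, valued in `ℝ≥0∞` (`⊤` if no alarm ever occurs). -/
noncomputable def cusumAlarm (c ε h : ℝ) (x : ℕ → ℝ) : ℝ≥0∞ :=
  sInf ((fun n : ℕ => (n : ℝ≥0∞)) ''
    {k : ℕ | 1 ≤ k ∧ (h ≤ gPlus c ε x k ∨ h ≤ gMinus c ε x k)})

/-- The two-sided CUSUM alarm time, valued in `ℕ∞` (`⊤` if no alarm ever occurs). -/
noncomputable def cusumAlarmENat (c ε h : ℝ) (x : ℕ → ℝ) : ℕ∞ :=
  sInf ((fun n : ℕ => (n : ℕ∞)) ''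
    {k : ℕ | 1 ≤ k ∧ (h ≤ gPlus c ε x k ∨ h ≤ gMinus c ε x k)})

/-- The successive alarm times obtained by repeatedly restarting the two-sided CUSUM
procedure with reference `c` on the observation stream `x`: `τ_0 = 0` and
`τ_{j+1} = τ_j + H(x(τ_j + ·))`, where `H` is the alarm time of a fresh CUSUM run on
the observations following `τ_j` (`⊤` once some run never alarms). -/
noncomputable def cusumRestartTimes (c ε h : ℝ) (x : ℕ → ℝ) : ℕ → ℕ∞
  | 0 => 0
  | j + 1 =>
      let t := cusumRestartTimes c ε h x j
      if t = ⊤ then ⊤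
      else (t.toNat : ℕ∞) + cusumAlarmENat c ε h (fun k => x (t.toNat + k))

/-- The number of alarms raised within the first `T` observations by repeatedly
restarting the two-sided CUSUM procedure (each alarm takes at least one observation,
so at most `T` alarms can occur by time `T`). -/
noncomputable def cusumAlarmCount (c ε h : ℝ) (x : ℕ → ℝ) (T : ℕ) : ℕ :=
  ((Finset.Icc 1 T).filter (fun j => cusumRestartTimes c ε h x j ≤ (T : ℕ∞))).card

namespace CusumAux

lemma gPlus_nonneg (c ε : ℝ) (x : ℕ → ℝ) (k : ℕ) : 0 ≤ gPlus c ε x k := by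
  cases k with
  | zero => exact le_refl _
  | succ k => exact le_max_left _ _

lemma gMinus_nonneg (c ε : ℝ) (x : ℕ → ℝ) (k : ℕ) : 0 ≤ gMinus c ε x k := by
  cases k with
  | zero => exact le_refl _
  | succ k => exact le_max_left _ _

lemma gPlus_segment (c ε : ℝ) (x : ℕ → ℝ) :
    ∀ k, 0 < gPlus c ε x k →
      ∃ j < k, gPlus c ε x k ≤ ∑ i ∈ Finset.Ico j k, (x i - c - ε) := by
  intro k
  induction k with
  | zero => intro hk; simp [gPlus] at hk
  | succ k ih =>
    intro hk
    have hmax : gPlus c ε x (k+1) = gPlus c ε x k + (x k - c - ε) := by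
      have := hk
      rw [gPlus] at this ⊢
      rcases max_choice 0 (gPlus c ε x k + (x k - c - ε)) with h | h
      · rw [h] at this; exact absurd this (lt_irrefl _)
      · exact h
    rcases lt_or_ge 0 (gPlus c ε x k) with hpos | hle
    · obtain ⟨j, hj, hle2⟩ := ih hpos
      refine ⟨j, hj.trans (Nat.lt_succ_self k), ?_⟩
      rw [hmax, Finset.sum_Ico_succ_top (le_of_lt hj)]
      linarith
    · have h0 : gPlus c ε x k = 0 := le_antisymm hle (gPlus_nonneg c ε x k)
      refine ⟨k, Nat.lt_succ_self k, ?_⟩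
      rw [hmax, h0, Finset.sum_Ico_succ_top (le_refl k)]
      simp
      
lemma gMinus_segment (c ε : ℝ) (x : ℕ → ℝ) :
    ∀ k, 0 < gMinus c ε x k →
      ∃ j < k, gMinus c ε x k ≤ ∑ i ∈ Finset.Ico j k, (c - x i - ε) := by
  intro k
  induction k with
  | zero => intro hk; simp [gMinus] at hk
  | succ k ih =>
    intro hk
    have hmax : gMinus c ε x (k+1) = gMinus c ε x k + (c - x k - ε) := by
      have := hk
      rw [gMinus] at this ⊢
      rcases max_choice 0 (gMinus c ε x k + (c - x k - ε)) with h | h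
      · rw [h] at this; exact absurd this (lt_irrefl _)
      · exact h
    rcases lt_or_ge 0 (gMinus c ε x k) with hpos | hle
    · obtain ⟨j, hj, hle2⟩ := ih hpos
      refine ⟨j, hj.trans (Nat.lt_succ_self k), ?_⟩
      rw [hmax, Finset.sum_Ico_succ_top (le_of_lt hj)]
      linarith
    · have h0 : gMinus c ε x k = 0 := le_antisymm hle (gMinus_nonneg c ε x k)
      refine ⟨k, Nat.lt_succ_self k, ?_⟩
      rw [hmax, h0, Finset.sum_Ico_succ_top (le_refl k)]
      simp

/-- sInf of nat-cast image in ℝ≥0∞ -/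
lemma sInf_image_ennreal (S : Set ℕ) (hS : S.Nonempty) :
    sInf ((fun n : ℕ => (n : ℝ≥0∞)) '' S) = (sInf S : ℕ) := by
  apply le_antisymm
  · exact sInf_le ⟨sInf S, Nat.sInf_mem hS, rfl⟩
  · apply le_sInf
    rintro x ⟨k, hk, rfl⟩
    exact Nat.cast_le.mpr (Nat.sInf_le hk)

lemma sInf_image_enat (S : Set ℕ) (hS : S.Nonempty) :
    sInf ((fun n : ℕ => (n : ℕ∞)) '' S) = (sInf S : ℕ) := by
  apply le_antisymm
  · exact sInf_le ⟨sInf S, Nat.sInf_mem hS, rfl⟩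
  · apply le_sInf
    rintro x ⟨k, hk, rfl⟩
    exact Nat.cast_le.mpr (Nat.sInf_le hk)

lemma sInf_image_ennreal_empty (S : Set ℕ) (hS : S = ∅) :
    sInf ((fun n : ℕ => (n : ℝ≥0∞)) '' S) = ⊤ := by
  rw [hS]; simp

lemma lt_sInf_image_ennreal (S : Set ℕ) (u : ℕ) :
    (u : ℝ≥0∞) < sInf ((fun n : ℕ => (n : ℝ≥0∞)) '' S) ↔ ∀ k ∈ S, u < k := by
  constructor
  · intro hlt k hk
    exact Nat.cast_lt.mp (lt_of_lt_of_le hlt (sInf_le ⟨k, hk, rfl⟩))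
  · intro hall
    have h1 : ((u+1 : ℕ) : ℝ≥0∞) ≤ sInf ((fun n : ℕ => (n : ℝ≥0∞)) '' S) := by
      apply le_sInf
      rintro x ⟨k, hk, rfl⟩
      exact Nat.cast_le.mpr (hall k hk)
    calc (u : ℝ≥0∞) < ((u+1 : ℕ) : ℝ≥0∞) := Nat.cast_lt.mpr (Nat.lt_succ_self u)
      _ ≤ _ := h1

/-- pointwise layer-cake for ℕ∞-like values of ℝ≥0∞ -/
lemma eq_tsum_indicator (a : ℝ≥0∞) (ha : a = ⊤ ∨ ∃ n : ℕ, a = n) :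
    a = ∑' u : ℕ, (if (u : ℝ≥0∞) < a then (1:ℝ≥0∞) else 0) := by
  rcases ha with rfl | ⟨n, rfl⟩
  · have : ∀ u : ℕ, (if (u : ℝ≥0∞) < ⊤ then (1:ℝ≥0∞) else 0) = 1 := by
      intro u; rw [if_pos (ENNReal.natCast_lt_top u)]
    rw [tsum_congr this]
    simp [ENNReal.tsum_const_eq_top_of_ne_zero]
  · rw [tsum_eq_sum (s := Finset.range n) (by
      intro u hu
      rw [if_neg]
      rw [Nat.cast_lt]
      simpa using hu)]
    rw [Finset.sum_congr rfl (fun u hu => by rw [if_pos (Nat.cast_lt.mpr (Finset.mem_range.mp hu))])]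
    simp

section Prob
variable {Ω : Type*} [MeasurableSpace Ω] {μ : Measure Ω} [IsProbabilityMeasure μ]
variable (y : ℕ → Ω → ℝ)

/-- σ-algebra generated by the observations with indices in `s`. -/
def blockM (s : Set ℕ) : MeasurableSpace Ω :=
  ⨆ i ∈ s, MeasurableSpace.comap (y i) inferInstance

lemma blockM_le (hmeas : ∀ k, Measurable (y k)) (s : Set ℕ) :
    blockM y s ≤ ‹MeasurableSpace Ω› :=
  iSup₂_le fun i _ => measurable_iff_comap_le.mp (hmeas i)

lemma blockM_mono {s t : Set ℕ} (hst : s ⊆ t) : blockM y s ≤ blockM y t := by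
  apply iSup₂_le
  intro i hi
  exact le_iSup₂ (f := fun i (_ : i ∈ t) => MeasurableSpace.comap (y i) inferInstance) i (hst hi)

lemma measurable_y_block {s : Set ℕ} {i : ℕ} (hi : i ∈ s) : Measurable[blockM y s] (y i) :=
  Measurable.of_comap_le
    (le_iSup₂ (f := fun i (_ : i ∈ s) => MeasurableSpace.comap (y i) inferInstance) i hi)

lemma indep_blocks (hmeas : ∀ k, Measurable (y k))
    (hindep : iIndepFun y μ)
    {s t : Set ℕ} (hst : Disjoint s t) :
    Indep (blockM y s) (blockM y t) μ :=
  indep_iSup_of_disjoint (fun i => measurable_iff_comap_le.mp (hmeas i)) hindep.iIndep hst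

/-- lintegral of a product over a block of mean-one nonneg variables is one. -/
lemma prod_one (hmeas : ∀ k, Measurable (y k))
    (hindep : iIndepFun y μ)
    (st : ℝ → ℝ) (hst : Measurable st) (ρ : ℝ)
    (hroot : ∀ i, ∫⁻ ω, ENNReal.ofReal (Real.exp (ρ * st (y i ω))) ∂μ = 1)
    (a : ℕ) : ∀ n : ℕ,
    ∫⁻ ω, ∏ i ∈ Finset.Ico a (a+n), ENNReal.ofReal (Real.exp (ρ * st (y i ω))) ∂μ = 1 := by
  have he_block : ∀ (s : Set ℕ) (i : ℕ), i ∈ s →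
      Measurable[blockM y s] (fun ω => ENNReal.ofReal (Real.exp (ρ * st (y i ω)))) := by
    intro s i hi
    exact ENNReal.measurable_ofReal.comp (Real.measurable_exp.comp
      (((hst.comp (measurable_y_block y hi)).const_mul ρ)))
  intro n
  induction n with
  | zero => simp
  | succ n ih =>
    have hsplit : ∀ ω : Ω, ∏ i ∈ Finset.Ico a (a+(n+1)), ENNReal.ofReal (Real.exp (ρ * st (y i ω)))
        = (∏ i ∈ Finset.Ico a (a+n), ENNReal.ofReal (Real.exp (ρ * st (y i ω)))) *
          ENNReal.ofReal (Real.exp (ρ * st (y (a+n) ω))) := by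
      intro ω
      rw [show a+(n+1) = (a+n)+1 from rfl, Finset.prod_Ico_succ_top (Nat.le_add_right a n)]
    rw [lintegral_congr hsplit]
    rw [lintegral_mul_eq_lintegral_mul_lintegral_of_independent_measurableSpace
      (Mf := blockM y {i | a ≤ i ∧ i < a + n}) (Mg := blockM y {a+n})
      (blockM_le y hmeas _) (blockM_le y hmeas _)
      (indep_blocks y hmeas hindep (by
        rw [Set.disjoint_left]
        rintro i ⟨_, hlt⟩ hmem
        rw [Set.mem_singleton_iff] at hmem
        omega))
      (Finset.measurable_prod _ (fun i hi => he_block _ i (by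
        simp only [Finset.mem_Ico] at hi
        exact ⟨hi.1, hi.2⟩)))
      (he_block _ (a+n) rfl)]
    rw [ih, hroot, one_mul]

/-- Maximal inequality: the probability that the random walk with steps `st (y (u+i))`
ever reaches level `h'` is at most `exp (-(ρ h'))`. -/
lemma walkHit (hmeas : ∀ k, Measurable (y k))
    (hindep : iIndepFun y μ)
    (st : ℝ → ℝ) (hst : Measurable st) (ρ h' : ℝ) (hρ : 0 < ρ) (hh' : 0 < h')
    (hroot : ∀ i, ∫⁻ ω, ENNReal.ofReal (Real.exp (ρ * st (y i ω))) ∂μ = 1)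
    (u : ℕ) :
    μ {ω | ∃ n, 1 ≤ n ∧ h' ≤ ∑ i ∈ Finset.range n, st (y (u+i) ω)} ≤
      ENNReal.ofReal (Real.exp (-(ρ * h'))) := by
  classical
  set e : ℕ → Ω → ℝ≥0∞ := fun i ω => ENNReal.ofReal (Real.exp (ρ * st (y i ω))) with he_def
  have he_block : ∀ (s : Set ℕ) (i : ℕ), i ∈ s → Measurable[blockM y s] (e i) := by
    intro s i hi
    exact ENNReal.measurable_ofReal.comp (Real.measurable_exp.comp
      (((hst.comp (measurable_y_block y hi)).const_mul ρ)))
  have he_meas : ∀ i, Measurable (e i) := fun i =>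
    ENNReal.measurable_ofReal.comp (Real.measurable_exp.comp
      (((hst.comp (hmeas i)).const_mul ρ)))
  set S : ℕ → Ω → ℝ := fun n ω => ∑ i ∈ Finset.range n, st (y (u+i) ω) with hS_def
  have hS_block : ∀ n, Measurable[blockM y {i | u ≤ i ∧ i < u + n}] (S n) := by
    intro n
    apply Finset.measurable_sum
    intro i hi
    simp only [Finset.mem_range] at hi
    exact hst.comp (measurable_y_block y ⟨Nat.le_add_right u i, by omega⟩)
  have hS_meas : ∀ n, Measurable (S n) := fun n =>
    (hS_block n).mono (blockM_le y hmeas _) le_rfl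
  set A : ℕ → Set Ω := fun n => {ω | h' ≤ S n ω ∧ ∀ m, m < n → S m ω < h'} with hA_def
  have hA_block : ∀ n, MeasurableSet[blockM y {i | u ≤ i ∧ i < u + n}] (A n) := by
    intro n
    have h1 : MeasurableSet[blockM y {i | u ≤ i ∧ i < u + n}] {ω | h' ≤ S n ω} :=
      measurableSet_le measurable_const (hS_block n)
    have h2 : ∀ m, m < n → MeasurableSet[blockM y {i | u ≤ i ∧ i < u + n}] {ω | S m ω < h'} := by
      intro m hm
      refine measurableSet_lt ((hS_block m).mono (blockM_mono y ?_) le_rfl) measurable_const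
      rintro i ⟨hi1, hi2⟩
      exact ⟨hi1, by omega⟩
    have : A n = {ω | h' ≤ S n ω} ∩ ⋂ m ∈ Finset.range n, {ω | S m ω < h'} := by
      ext ω
      simp only [hA_def, Set.mem_setOf_eq, Set.mem_inter_iff, Set.mem_iInter, Finset.mem_range]
    rw [this]
    exact h1.inter (MeasurableSet.biInter (Finset.range n).countable_toSet
      (fun m hm => h2 m (Finset.mem_range.mp hm)))
  have hA_meas : ∀ n, MeasurableSet (A n) := fun n =>
    (blockM_le y hmeas _ _) (hA_block n)
  have hA_disj : Pairwise (Function.onFun Disjoint A) := by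
    intro n m hnm
    rw [Function.onFun, Set.disjoint_left]
    intro ω hn hm
    rcases lt_or_gt_of_ne hnm with hlt | hlt
    · exact absurd hn.1 (not_le.mpr (hm.2 n hlt))
    · exact absurd hm.1 (not_le.mpr (hn.2 m hlt))
  have hT0 : {ω | ∃ n, 1 ≤ n ∧ h' ≤ S n ω} = ⋃ n, A n := by
    ext ω
    simp only [Set.mem_setOf_eq, Set.mem_iUnion]
    constructor
    · rintro ⟨n, _, hn⟩
      have hne : {m | h' ≤ S m ω}.Nonempty := ⟨n, hn⟩
      refine ⟨sInf {m | h' ≤ S m ω}, Nat.sInf_mem hne, ?_⟩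
      intro m hm
      have hnot : m ∉ {m | h' ≤ S m ω} := Nat.notMem_of_lt_sInf hm
      exact not_le.mp hnot
    · rintro ⟨n, hn⟩
      refine ⟨n, ?_, hn.1⟩
      by_contra hcon
      have hn0 : n = 0 := by omega
      rw [hn0] at hn
      have h1 := hn.1
      have h0 : S 0 ω = 0 := by simp [hS_def]
      rw [h0] at h1
      linarith
  rw [hT0, measure_iUnion hA_disj hA_meas]
  apply ENNReal.tsum_le_of_sum_range_le
  intro N
  -- key estimate for partial sums
  have prodN := prod_one y hmeas hindep st hst ρ hroot
  have key : ∀ n, n < N → ENNReal.ofReal (Real.exp (ρ * h')) * μ (A n) ≤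
      ∫⁻ ω, (Set.indicator (A n) (fun _ => (1:ℝ≥0∞)) ω) * ∏ i ∈ Finset.Ico u (u+N), e i ω ∂μ := by
    intro n hnN
    have hsplit : ∀ ω, (Set.indicator (A n) (fun _ => (1:ℝ≥0∞)) ω) * ∏ i ∈ Finset.Ico u (u+N), e i ω
        = ((Set.indicator (A n) (fun _ => (1:ℝ≥0∞)) ω) * ∏ i ∈ Finset.Ico u (u+n), e i ω) *
          ∏ i ∈ Finset.Ico (u+n) (u+N), e i ω := by
      intro ω
      rw [mul_assoc, ← Finset.prod_Ico_consecutive _ (Nat.le_add_right u n) (by omega)]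
    rw [lintegral_congr hsplit]
    rw [lintegral_mul_eq_lintegral_mul_lintegral_of_independent_measurableSpace
      (f := fun ω => Set.indicator (A n) (fun _ => (1:ℝ≥0∞)) ω * ∏ i ∈ Finset.Ico u (u+n), e i ω)
      (Mf := blockM y {i | u ≤ i ∧ i < u + n}) (Mg := blockM y {i | u + n ≤ i ∧ i < u + N})
      (blockM_le y hmeas _) (blockM_le y hmeas _)
      (indep_blocks y hmeas hindep (by
        rw [Set.disjoint_left]
        rintro i ⟨_, h1⟩ ⟨h2, _⟩
        omega))
      (((Measurable.indicator measurable_const (hA_block n)).mul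
        (Finset.measurable_prod _ (fun i hi => he_block _ i (by
          simp only [Finset.mem_Ico] at hi
          exact ⟨hi.1, hi.2⟩)))))
      (Finset.measurable_prod _ (fun i hi => he_block _ i (by
        simp only [Finset.mem_Ico] at hi
        exact ⟨hi.1, hi.2⟩)))]
    have hrest : ∫⁻ ω, ∏ i ∈ Finset.Ico (u+n) (u+N), e i ω ∂μ = 1 := by
      have := prodN (u+n) (N - n)
      rwa [show u+n+(N-n) = u+N by omega] at this
    rw [hrest, mul_one]
    -- lower bound the remaining integral
    have hlower : ∀ ω, Set.indicator (A n) (fun _ => (1:ℝ≥0∞)) ω * ENNReal.ofReal (Real.exp (ρ * h'))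
        ≤ Set.indicator (A n) (fun _ => (1:ℝ≥0∞)) ω * ∏ i ∈ Finset.Ico u (u+n), e i ω := by
      intro ω
      by_cases hω : ω ∈ A n
      · rw [Set.indicator_of_mem hω, one_mul, one_mul]
        have hprod : ∏ i ∈ Finset.Ico u (u+n), e i ω
            = ENNReal.ofReal (Real.exp (ρ * S n ω)) := by
          rw [he_def]
          rw [← ENNReal.ofReal_prod_of_nonneg (fun i _ => (Real.exp_pos _).le)]
          congr 1
          rw [← Real.exp_sum]
          congr 1
          rw [Finset.sum_Ico_eq_sum_range]
          simp [hS_def, Finset.mul_sum]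
        rw [hprod]
        apply ENNReal.ofReal_le_ofReal
        apply Real.exp_le_exp.mpr
        exact mul_le_mul_of_nonneg_left hω.1 hρ.le
      · rw [Set.indicator_of_notMem hω, zero_mul, zero_mul]
    calc ENNReal.ofReal (Real.exp (ρ * h')) * μ (A n)
        = ∫⁻ ω, Set.indicator (A n) (fun _ => (1:ℝ≥0∞)) ω * ENNReal.ofReal (Real.exp (ρ * h')) ∂μ := by
          rw [lintegral_mul_const _ (Measurable.indicator measurable_const (hA_meas n))]
          rw [lintegral_indicator (hA_meas n)]
          simp [mul_comm]
      _ ≤ _ := lintegral_mono hlower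
  -- sum the key estimates
  have hsum : ∑ n ∈ Finset.range N, ∫⁻ ω,
      (Set.indicator (A n) (fun _ => (1:ℝ≥0∞)) ω) * ∏ i ∈ Finset.Ico u (u+N), e i ω ∂μ ≤ 1 := by
    rw [← lintegral_finset_sum _ (f := fun n ω =>
      (Set.indicator (A n) (fun _ => (1:ℝ≥0∞)) ω) * ∏ i ∈ Finset.Ico u (u+N), e i ω) (fun n _ =>
      (Measurable.indicator measurable_const (hA_meas n)).mul
        (Finset.measurable_prod _ (fun i _ => he_meas i)))]
    have hbound : ∀ ω, ∑ n ∈ Finset.range N,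
        (Set.indicator (A n) (fun _ => (1:ℝ≥0∞)) ω) * ∏ i ∈ Finset.Ico u (u+N), e i ω
        ≤ ∏ i ∈ Finset.Ico u (u+N), e i ω := by
      intro ω
      rw [← Finset.sum_mul]
      have hind : ∑ n ∈ Finset.range N, Set.indicator (A n) (fun _ => (1:ℝ≥0∞)) ω ≤ 1 := by
        have : ∑ n ∈ Finset.range N, Set.indicator (A n) (fun _ => (1:ℝ≥0∞)) ω
            = ((Finset.range N).filter (fun n => ω ∈ A n)).card := by
          simp only [Set.indicator_apply]
          rw [Finset.sum_boole]
        rw [this]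
        have hcard : ((Finset.range N).filter (fun n => ω ∈ A n)).card ≤ 1 := by
          apply Finset.card_le_one.mpr
          intro a ha b hb
          simp only [Finset.mem_filter] at ha hb
          by_contra hab
          exact Set.disjoint_left.mp (hA_disj hab) ha.2 hb.2
        exact_mod_cast hcard
      calc (∑ n ∈ Finset.range N, Set.indicator (A n) (fun _ => (1:ℝ≥0∞)) ω) *
            ∏ i ∈ Finset.Ico u (u+N), e i ω
          ≤ 1 * ∏ i ∈ Finset.Ico u (u+N), e i ω := mul_le_mul_left hind _
        _ = _ := one_mul _
    calc ∫⁻ ω, ∑ n ∈ Finset.range N,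
          (Set.indicator (A n) (fun _ => (1:ℝ≥0∞)) ω) * ∏ i ∈ Finset.Ico u (u+N), e i ω ∂μ
        ≤ ∫⁻ ω, ∏ i ∈ Finset.Ico u (u+N), e i ω ∂μ := lintegral_mono hbound
      _ = 1 := by
          have := prodN u N
          exact this
  have hmain : ENNReal.ofReal (Real.exp (ρ * h')) * ∑ n ∈ Finset.range N, μ (A n) ≤ 1 := by
    rw [Finset.mul_sum]
    calc ∑ n ∈ Finset.range N, ENNReal.ofReal (Real.exp (ρ * h')) * μ (A n)
        ≤ ∑ n ∈ Finset.range N, ∫⁻ ω,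
            (Set.indicator (A n) (fun _ => (1:ℝ≥0∞)) ω) * ∏ i ∈ Finset.Ico u (u+N), e i ω ∂μ :=
          Finset.sum_le_sum (fun n hn => key n (Finset.mem_range.mp hn))
      _ ≤ 1 := hsum
  have hc_ne_zero : ENNReal.ofReal (Real.exp (ρ * h')) ≠ 0 := by
    simp [ENNReal.ofReal_eq_zero, not_le, Real.exp_pos]
  have hc_ne_top : ENNReal.ofReal (Real.exp (ρ * h')) ≠ ⊤ := ENNReal.ofReal_ne_top
  have hdiv : ∑ n ∈ Finset.range N, μ (A n) ≤ (ENNReal.ofReal (Real.exp (ρ * h')))⁻¹ := by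
    rw [ENNReal.le_inv_iff_mul_le]
    rw [mul_comm]
    exact hmain
  calc ∑ n ∈ Finset.range N, μ (A n) ≤ (ENNReal.ofReal (Real.exp (ρ * h')))⁻¹ := hdiv
    _ = ENNReal.ofReal (Real.exp (-(ρ * h'))) := by
        rw [← ENNReal.ofReal_inv_of_pos (Real.exp_pos _)]
        congr 1
        rw [← Real.exp_neg]

end Prob

section Cusum
variable {Ω : Type*} [MeasurableSpace Ω] {μ : Measure Ω} [IsProbabilityMeasure μ]
variable (y : ℕ → Ω → ℝ) (c ε h : ℝ)

/-- The "bad" event: the random walk started at index `u` ever crosses level `h`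
in either direction. -/
def badSet (u : ℕ) : Set Ω :=
  {ω | ∃ n, 1 ≤ n ∧ (h ≤ ∑ i ∈ Finset.range n, (y (u+i) ω - c - ε) ∨
    h ≤ ∑ i ∈ Finset.range n, (c - y (u+i) ω - ε))}

lemma badSet_block (u : ℕ) :
    MeasurableSet[blockM y {i | u ≤ i}] (badSet y c ε h u) := by
  have hsum : ∀ n (f : ℝ → ℝ), Measurable f →
      Measurable[blockM y {i | u ≤ i}] (fun ω => ∑ i ∈ Finset.range n, f (y (u+i) ω)) := by
    intro n f hf
    apply Finset.measurable_sum
    intro i _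
    exact hf.comp (measurable_y_block y (Nat.le_add_right u i))
  have heq : badSet y c ε h u = ⋃ n, {ω | 1 ≤ n ∧
      (h ≤ ∑ i ∈ Finset.range n, (y (u+i) ω - c - ε) ∨
       h ≤ ∑ i ∈ Finset.range n, (c - y (u+i) ω - ε))} := by
    ext ω
    simp only [badSet, Set.mem_setOf_eq, Set.mem_iUnion]
  rw [heq]
  apply MeasurableSet.iUnion
  intro n
  by_cases hn : 1 ≤ n
  · simp only [hn, true_and]
    apply MeasurableSet.union
    · exact measurableSet_le measurable_const (hsum n (fun t => t - c - ε)
        ((measurable_id.sub_const c).sub_const ε))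
    · exact measurableSet_le measurable_const (hsum n (fun t => c - t - ε)
        (((measurable_const.sub measurable_id)).sub_const ε))
  · simp only [hn, false_and, Set.setOf_false]
    exact @MeasurableSet.empty Ω (blockM y {i | u ≤ i})

lemma badSet_meas (hmeas : ∀ k, Measurable (y k)) (u : ℕ) :
    MeasurableSet (badSet y c ε h u) :=
  blockM_le y hmeas _ _ (badSet_block y c ε h u)

lemma badSet_measure_le (hmeas : ∀ k, Measurable (y k))
    (hindep : iIndepFun y μ)
    (hh : 0 < h) (rm rp : ℝ) (hrm : 0 < rm) (hrp : 0 < rp)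
    (hrootm : ∀ i, ∫⁻ ω, ENNReal.ofReal (Real.exp (rm * (c - y i ω - ε))) ∂μ = 1)
    (hrootp : ∀ i, ∫⁻ ω, ENNReal.ofReal (Real.exp (rp * (y i ω - c - ε))) ∂μ = 1)
    (u : ℕ) :
    μ (badSet y c ε h u) ≤
      ENNReal.ofReal (Real.exp (-(rp * h))) + ENNReal.ofReal (Real.exp (-(rm * h))) := by
  have hsub : badSet y c ε h u ⊆
      {ω | ∃ n, 1 ≤ n ∧ h ≤ ∑ i ∈ Finset.range n, (fun t => t - c - ε) (y (u+i) ω)} ∪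
      {ω | ∃ n, 1 ≤ n ∧ h ≤ ∑ i ∈ Finset.range n, (fun t => c - t - ε) (y (u+i) ω)} := by
    rintro ω ⟨n, hn, hor⟩
    rcases hor with hp | hm
    · exact Or.inl ⟨n, hn, hp⟩
    · exact Or.inr ⟨n, hn, hm⟩
  calc μ (badSet y c ε h u) ≤ _ := measure_mono hsub
    _ ≤ μ {ω | ∃ n, 1 ≤ n ∧ h ≤ ∑ i ∈ Finset.range n, (fun t => t - c - ε) (y (u+i) ω)} +
        μ {ω | ∃ n, 1 ≤ n ∧ h ≤ ∑ i ∈ Finset.range n, (fun t => c - t - ε) (y (u+i) ω)} :=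
      measure_union_le _ _
    _ ≤ _ := by
      gcongr
      · exact walkHit y hmeas hindep (fun t => t - c - ε)
          ((measurable_id.sub_const c).sub_const ε) rp h hrp hh hrootp u
      · exact walkHit y hmeas hindep (fun t => c - t - ε)
          ((measurable_const.sub measurable_id).sub_const ε) rm h hrm hh hrootm u

/-- An alarm at time `k` gives a bad index `j < k`. -/
lemma alarm_mem_bad (hh : 0 < h) (ω : Ω) (k : ℕ)
    (halarm : h ≤ gPlus c ε (fun i => y i ω) k ∨ h ≤ gMinus c ε (fun i => y i ω) k) :
    ∃ j < k, ω ∈ badSet y c ε h j := by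
  rcases halarm with hp | hm
  · obtain ⟨j, hj, hle⟩ := gPlus_segment c ε (fun i => y i ω) k (lt_of_lt_of_le hh hp)
    refine ⟨j, hj, ⟨k - j, by omega, Or.inl ?_⟩⟩
    have heq : ∑ i ∈ Finset.Ico j k, ((fun i => y i ω) i - c - ε)
        = ∑ i ∈ Finset.range (k - j), (y (j+i) ω - c - ε) := by
      rw [Finset.sum_Ico_eq_sum_range]
    calc h ≤ gPlus c ε (fun i => y i ω) k := hp
      _ ≤ _ := hle
      _ = _ := heq
  · obtain ⟨j, hj, hle⟩ := gMinus_segment c ε (fun i => y i ω) k (lt_of_lt_of_le hh hm)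
    refine ⟨j, hj, ⟨k - j, by omega, Or.inr ?_⟩⟩
    have heq : ∑ i ∈ Finset.Ico j k, (c - (fun i => y i ω) i - ε)
        = ∑ i ∈ Finset.range (k - j), (c - y (j+i) ω - ε) := by
      rw [Finset.sum_Ico_eq_sum_range]
    calc h ≤ gMinus c ε (fun i => y i ω) k := hm
      _ ≤ _ := hle
      _ = _ := heq

lemma measurable_gPlus_block : ∀ k,
    Measurable[blockM y {i | i < k}] (fun ω => gPlus c ε (fun i => y i ω) k) := by
  intro k
  induction k with
  | zero => simp only [gPlus]; exact measurable_const
  | succ k ih =>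
    simp only [gPlus]
    apply Measurable.max measurable_const
    apply Measurable.add
    · exact ih.mono (blockM_mono y (fun i (hi : i < k) => Nat.lt_succ_of_lt hi)) le_rfl
    · exact ((measurable_y_block y (show k ∈ {i : ℕ | i < k+1} from Nat.lt_succ_self k)).sub_const c).sub_const ε

lemma measurable_gMinus_block : ∀ k,
    Measurable[blockM y {i | i < k}] (fun ω => gMinus c ε (fun i => y i ω) k) := by
  intro k
  induction k with
  | zero => simp only [gMinus]; exact measurable_const
  | succ k ih =>
    simp only [gMinus]
    apply Measurable.max measurable_const
    apply Measurable.add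
    · exact ih.mono (blockM_mono y (fun i (hi : i < k) => Nat.lt_succ_of_lt hi)) le_rfl
    · exact (measurable_const.sub (measurable_y_block y (show k ∈ {i : ℕ | i < k+1} from Nat.lt_succ_self k))).sub_const ε

/-- The "no alarm up to time u" event. -/
def noAlarm (u : ℕ) : Set Ω :=
  {ω | ∀ k, (1 ≤ k ∧ (h ≤ gPlus c ε (fun i => y i ω) k ∨
    h ≤ gMinus c ε (fun i => y i ω) k)) → u < k}

lemma noAlarm_block (u : ℕ) :
    MeasurableSet[blockM y {i | i < u}] (noAlarm y c ε h u) := by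
  have heq : noAlarm y c ε h u = ⋂ k ∈ Finset.Icc 1 u,
      {ω | ¬(h ≤ gPlus c ε (fun i => y i ω) k ∨ h ≤ gMinus c ε (fun i => y i ω) k)} := by
    ext ω
    simp only [noAlarm, Set.mem_setOf_eq, Set.mem_iInter, Finset.mem_Icc]
    constructor
    · rintro hall k ⟨hk1, hku⟩ hcond
      exact absurd (hall k ⟨hk1, hcond⟩) (not_lt.mpr hku)
    · rintro hall k ⟨hk1, hcond⟩
      by_contra hcon
      exact hall k ⟨hk1, not_lt.mp hcon⟩ hcond
  rw [heq]
  apply MeasurableSet.biInter (Finset.Icc 1 u).countable_toSet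
  intro k hk
  have hk' : 1 ≤ k ∧ k ≤ u := by simpa using hk
  have hmono : blockM y {i | i < k} ≤ blockM (Ω := Ω) y {i | i < u} :=
    blockM_mono y (fun i (hi : i < k) => lt_of_lt_of_le hi hk'.2)
  apply MeasurableSet.compl
  apply MeasurableSet.union
  · exact (measurableSet_le measurable_const
      ((measurable_gPlus_block y c ε k).mono hmono le_rfl))
  · exact (measurableSet_le measurable_const
      ((measurable_gMinus_block y c ε k).mono hmono le_rfl))

lemma noAlarm_meas (hmeas : ∀ k, Measurable (y k)) (u : ℕ) :
    MeasurableSet (noAlarm y c ε h u) :=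
  blockM_le y hmeas _ _ (noAlarm_block y c ε h u)

lemma noAlarm_eq_lt (u : ℕ) :
    noAlarm y c ε h u = {ω | (u : ℝ≥0∞) < cusumAlarm c ε h (fun k => y k ω)} := by
  ext ω
  rw [Set.mem_setOf_eq, cusumAlarm, lt_sInf_image_ennreal]
  rfl

end Cusum

section Conj1
variable {Ω : Type*} [MeasurableSpace Ω] {μ : Measure Ω} [IsProbabilityMeasure μ]
variable (y : ℕ → Ω → ℝ) (c ε h : ℝ)

lemma conj_one (hmeas : ∀ k, Measurable (y k))
    (hindep : iIndepFun y μ)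
    (hh : 0 < h) (rm rp r : ℝ) (hrm : 0 < rm) (hrp : 0 < rp) (hr : r = min rm rp)
    (hrootm : ∀ i, ∫⁻ ω, ENNReal.ofReal (Real.exp (rm * (c - y i ω - ε))) ∂μ = 1)
    (hrootp : ∀ i, ∫⁻ ω, ENNReal.ofReal (Real.exp (rp * (y i ω - c - ε))) ∂μ = 1) :
    ENNReal.ofReal (Real.exp (r * h) / 2) ≤
      ∫⁻ ω, cusumAlarm c ε h (fun k => y k ω) ∂μ := by
  classical
  set q : ℝ≥0∞ := ENNReal.ofReal (Real.exp (-(rp * h))) + ENNReal.ofReal (Real.exp (-(rm * h)))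
    with hq_def
  have hbad : ∀ u, μ (badSet y c ε h u) ≤ q :=
    badSet_measure_le y c ε h hmeas hindep hh rm rp hrm hrp hrootm hrootp
  set H : Ω → ℝ≥0∞ := fun ω => cusumAlarm c ε h (fun k => y k ω) with hH_def
  set L := ∫⁻ ω, H ω ∂μ with hL_def
  -- alarm set for each ω
  set SA : Ω → Set ℕ := fun ω => {k | 1 ≤ k ∧ (h ≤ gPlus c ε (fun i => y i ω) k ∨
    h ≤ gMinus c ε (fun i => y i ω) k)} with hSA_def
  have hH_eq : ∀ ω, H ω = sInf ((fun n : ℕ => (n : ℝ≥0∞)) '' SA ω) := fun ω => rfl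
  -- layer cake
  have hlayer : L = ∑' u : ℕ, μ (noAlarm y c ε h u) := by
    have hpt : ∀ ω, H ω = ∑' u : ℕ, Set.indicator (noAlarm y c ε h u) (fun _ => (1:ℝ≥0∞)) ω := by
      intro ω
      have hval : H ω = ⊤ ∨ ∃ n : ℕ, H ω = n := by
        rcases Set.eq_empty_or_nonempty (SA ω) with he | hne
        · left; rw [hH_eq, he]; simp
        · right; exact ⟨sInf (SA ω), by rw [hH_eq, sInf_image_ennreal _ hne]⟩
      have := eq_tsum_indicator (H ω) hval
      rw [this]
      congr 1
      ext u
      rw [Set.indicator_apply]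
      congr 1
      · rw [eq_iff_iff]
        rw [noAlarm_eq_lt]
        rfl
    rw [hL_def, lintegral_congr hpt, lintegral_tsum (fun u =>
      ((measurable_const.indicator (noAlarm_meas y c ε h hmeas u))).aemeasurable)]
    congr 1
    ext u
    rw [lintegral_indicator_const (noAlarm_meas y c ε h hmeas u), one_mul]
  -- the set where an alarm eventually occurs
  set D : Set Ω := ⋃ k, ⋃ (_ : 1 ≤ k), ({ω | h ≤ gPlus c ε (fun i => y i ω) k} ∪
    {ω | h ≤ gMinus c ε (fun i => y i ω) k}) with hD_def
  have hD_meas : MeasurableSet D := by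
    apply MeasurableSet.iUnion; intro k; apply MeasurableSet.iUnion; intro _
    apply MeasurableSet.union
    · exact measurableSet_le measurable_const
        ((measurable_gPlus_block y c ε k).mono (blockM_le y hmeas _) le_rfl)
    · exact measurableSet_le measurable_const
        ((measurable_gMinus_block y c ε k).mono (blockM_le y hmeas _) le_rfl)
  have hD_eq : D = {ω | H ω ≠ ⊤} := by
    ext ω
    simp only [hD_def, Set.mem_iUnion, Set.mem_union, Set.mem_setOf_eq]
    constructor
    · rintro ⟨k, hk1, hcond⟩
      have hne : (SA ω).Nonempty := ⟨k, hk1, hcond⟩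
      rw [hH_eq, sInf_image_ennreal _ hne]
      exact ENNReal.natCast_ne_top _
    · intro hne
      by_contra hcon
      push_neg at hcon
      have hempty : SA ω = ∅ := by
        rw [Set.eq_empty_iff_forall_notMem]
        rintro k ⟨hk1, hcond⟩
        rcases hcond with hp | hm
        · exact absurd (hcon k hk1).1 (not_lt.mpr hp)
        · exact absurd (hcon k hk1).2 (not_lt.mpr hm)
      rw [hH_eq, hempty] at hne
      simp at hne
  -- Wald-type bound
  have hDsub : D ⊆ ⋃ u, (noAlarm y c ε h u ∩ badSet y c ε h u) := by
    intro ω hω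
    rw [hD_eq, Set.mem_setOf_eq] at hω
    have hne : (SA ω).Nonempty := by
      by_contra hcon
      rw [Set.not_nonempty_iff_eq_empty] at hcon
      rw [hH_eq, hcon] at hω
      simp at hω
    set k₀ := sInf (SA ω) with hk₀
    have hk₀mem : k₀ ∈ SA ω := Nat.sInf_mem hne
    obtain ⟨j, hj, hbadj⟩ := alarm_mem_bad y c ε h hh ω k₀ hk₀mem.2
    rw [Set.mem_iUnion]
    refine ⟨j, ?_, hbadj⟩
    intro k hk
    calc j < k₀ := hj
      _ ≤ k := Nat.sInf_le hk
  have hwald : μ D ≤ L * q := by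
    calc μ D ≤ ∑' u, μ (noAlarm y c ε h u ∩ badSet y c ε h u) :=
        (measure_mono hDsub).trans (measure_iUnion_le _)
      _ = ∑' u, μ (noAlarm y c ε h u) * μ (badSet y c ε h u) := by
          congr 1
          ext u
          exact (indep_blocks y hmeas hindep (s := {i | i < u}) (t := {i | u ≤ i})
            (by
              rw [Set.disjoint_left]
              intro i hi1 hi2
              simp only [Set.mem_setOf_eq] at hi1 hi2
              omega)
            |> (Indep_iff _ _ _).mp) _ _ (noAlarm_block y c ε h u) (badSet_block y c ε h u)
      _ ≤ ∑' u, μ (noAlarm y c ε h u) * q := by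
          apply ENNReal.tsum_le_tsum
          intro u
          exact mul_le_mul_right (hbad u) _
      _ = (∑' u, μ (noAlarm y c ε h u)) * q := by rw [ENNReal.tsum_mul_right]
      _ = L * q := by rw [← hlayer]
  -- bound q
  have hqle : q ≤ ENNReal.ofReal (2 * Real.exp (-(r * h))) := by
    have h1 : Real.exp (-(rp * h)) ≤ Real.exp (-(r * h)) := by
      apply Real.exp_le_exp.mpr
      have : r ≤ rp := by rw [hr]; exact min_le_right _ _
      nlinarith
    have h2 : Real.exp (-(rm * h)) ≤ Real.exp (-(r * h)) := by
      apply Real.exp_le_exp.mpr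
      have : r ≤ rm := by rw [hr]; exact min_le_left _ _
      nlinarith
    rw [hq_def, ← ENNReal.ofReal_add (Real.exp_pos _).le (Real.exp_pos _).le]
    apply ENNReal.ofReal_le_ofReal
    linarith
  have hinv : ENNReal.ofReal (Real.exp (r * h) / 2) ≤ q⁻¹ := by
    calc ENNReal.ofReal (Real.exp (r * h) / 2)
        = (ENNReal.ofReal (2 * Real.exp (-(r * h))))⁻¹ := by
          rw [← ENNReal.ofReal_inv_of_pos (by positivity)]
          congr 1
          rw [Real.exp_neg]
          field_simp
      _ ≤ q⁻¹ := ENNReal.inv_le_inv.mpr hqle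
  -- case split
  by_cases htop : μ Dᶜ = 0
  · have hD1 : μ D = 1 := by
      have := measure_compl hD_meas (measure_ne_top μ D)
      rw [htop] at this
      have hμuniv : μ Set.univ = 1 := measure_univ
      have : μ D = 1 := by
        have h1 : μ Set.univ - μ D = 0 := this.symm
        have h2 : μ D ≤ μ Set.univ := measure_mono (Set.subset_univ _)
        rw [hμuniv] at h1 h2
        have := tsub_eq_zero_iff_le.mp h1
        exact le_antisymm h2 this
      exact this
    have hone : (1 : ℝ≥0∞) ≤ L * q := by rw [← hD1]; exact hwald
    have hq_ne_zero : q ≠ 0 := by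
      rw [hq_def]
      simp only [ne_eq, add_eq_zero, not_and]
      intro hcon
      rw [ENNReal.ofReal_eq_zero] at hcon
      exact absurd hcon (not_le.mpr (Real.exp_pos _))
    have hq_ne_top : q ≠ ⊤ := by
      rw [hq_def]
      exact ENNReal.add_ne_top.mpr ⟨ENNReal.ofReal_ne_top, ENNReal.ofReal_ne_top⟩
    have hLq : q⁻¹ ≤ L := by
      calc q⁻¹ = q⁻¹ * 1 := (mul_one _).symm
        _ ≤ q⁻¹ * (L * q) := mul_le_mul_right hone _
        _ = L * (q⁻¹ * q) := by ring
        _ = L := by rw [ENNReal.inv_mul_cancel hq_ne_zero hq_ne_top, mul_one]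
    exact hinv.trans hLq
  · have hLtop : L = ⊤ := by
      have hsub2 : ∀ ω, Set.indicator Dᶜ (fun _ => (⊤:ℝ≥0∞)) ω ≤ H ω := by
        intro ω
        by_cases hω : ω ∈ Dᶜ
        · rw [Set.indicator_of_mem hω]
          have : H ω = ⊤ := by
            rw [Set.mem_compl_iff, hD_eq, Set.mem_setOf_eq] at hω
            push_neg at hω
            exact hω
          rw [this]
        · rw [Set.indicator_of_notMem hω]
          exact zero_le
      have : (⊤:ℝ≥0∞) * μ Dᶜ ≤ L := by
        rw [← lintegral_indicator_const hD_meas.compl]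
        exact lintegral_mono hsub2
      rwa [ENNReal.top_mul htop, top_le_iff] at this
    exact le_top.trans_eq hLtop.symm

end Conj1

section Conj2
variable {Ω : Type*} [MeasurableSpace Ω] {μ : Measure Ω} [IsProbabilityMeasure μ]

lemma one_le_alarmENat (c ε h : ℝ) (x : ℕ → ℝ) : 1 ≤ cusumAlarmENat c ε h x := by
  apply le_sInf
  rintro a ⟨k, ⟨hk1, _⟩, rfl⟩
  show (1:ℕ∞) ≤ (k:ℕ∞)
  exact_mod_cast hk1

lemma restart_le_succ (c ε h : ℝ) (x : ℕ → ℝ) (j : ℕ) :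
    cusumRestartTimes c ε h x j ≤ cusumRestartTimes c ε h x (j+1) := by
  rw [show cusumRestartTimes c ε h x (j+1) =
    (let t := cusumRestartTimes c ε h x j
     if t = ⊤ then ⊤ else (t.toNat : ℕ∞) + cusumAlarmENat c ε h (fun k => x (t.toNat + k)))
    from rfl]
  by_cases htop : cusumRestartTimes c ε h x j = ⊤
  · simp [htop]
  · simp only [htop, if_false]
    rw [ENat.coe_toNat htop]
    exact le_self_add

lemma restart_mono (c ε h : ℝ) (x : ℕ → ℝ) : Monotone (cusumRestartTimes c ε h x) :=
  monotone_nat_of_le_succ (restart_le_succ c ε h x)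

lemma restart_top_succ (c ε h : ℝ) (x : ℕ → ℝ) (j : ℕ)
    (htop : cusumRestartTimes c ε h x j = ⊤) : cusumRestartTimes c ε h x (j+1) = ⊤ := by
  rw [show cusumRestartTimes c ε h x (j+1) =
    (let t := cusumRestartTimes c ε h x j
     if t = ⊤ then ⊤ else (t.toNat : ℕ∞) + cusumAlarmENat c ε h (fun k => x (t.toNat + k)))
    from rfl]
  simp [htop]

/-- Each finite restart time yields a bad index in the preceding run. -/
lemma restart_witness (c ε h : ℝ) (hh : 0 < h) (x : ℕ → ℝ) (j : ℕ)
    (hfin : cusumRestartTimes c ε h x (j+1) ≠ ⊤) :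
    ∃ u : ℕ, cusumRestartTimes c ε h x j ≤ (u : ℕ∞) ∧
      (u : ℕ∞) < cusumRestartTimes c ε h x (j+1) ∧
      (∃ n, 1 ≤ n ∧ (h ≤ ∑ i ∈ Finset.range n, (x (u+i) - c - ε) ∨
        h ≤ ∑ i ∈ Finset.range n, (c - x (u+i) - ε))) := by
  have htj : cusumRestartTimes c ε h x j ≠ ⊤ := by
    intro hcon
    exact hfin (restart_top_succ c ε h x j hcon)
  set t := (cusumRestartTimes c ε h x j).toNat with ht_def
  have hstep : cusumRestartTimes c ε h x (j+1) =
      (t : ℕ∞) + cusumAlarmENat c ε h (fun k => x (t + k)) := by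
    rw [show cusumRestartTimes c ε h x (j+1) =
      (let t' := cusumRestartTimes c ε h x j
       if t' = ⊤ then ⊤ else (t'.toNat : ℕ∞) + cusumAlarmENat c ε h (fun k => x (t'.toNat + k)))
      from rfl]
    simp [htj]
    rfl
  set x' := fun k => x (t + k) with hx'_def
  have hAfin : cusumAlarmENat c ε h x' ≠ ⊤ := by
    intro hcon
    rw [hstep, hcon] at hfin
    simp at hfin
  have hne : {k : ℕ | 1 ≤ k ∧ (h ≤ gPlus c ε x' k ∨ h ≤ gMinus c ε x' k)}.Nonempty := by
    by_contra hcon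
    rw [Set.not_nonempty_iff_eq_empty] at hcon
    apply hAfin
    rw [cusumAlarmENat, hcon]
    simp
  set k₀ := sInf {k : ℕ | 1 ≤ k ∧ (h ≤ gPlus c ε x' k ∨ h ≤ gMinus c ε x' k)} with hk₀_def
  have hk₀mem := Nat.sInf_mem hne
  have hA_eq : cusumAlarmENat c ε h x' = (k₀ : ℕ∞) := by
    rw [cusumAlarmENat, sInf_image_enat _ hne]
  -- extract the segment
  have hseg : ∃ a < k₀, (h ≤ ∑ i ∈ Finset.range (k₀ - a), (x' (a+i) - c - ε) ∨
      h ≤ ∑ i ∈ Finset.range (k₀ - a), (c - x' (a+i) - ε)) := by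
    rcases hk₀mem.2 with hp | hm
    · obtain ⟨a, ha, hle⟩ := gPlus_segment c ε x' k₀ (lt_of_lt_of_le hh hp)
      refine ⟨a, ha, Or.inl ?_⟩
      calc h ≤ gPlus c ε x' k₀ := hp
        _ ≤ ∑ i ∈ Finset.Ico a k₀, (x' i - c - ε) := hle
        _ = _ := by rw [Finset.sum_Ico_eq_sum_range]
    · obtain ⟨a, ha, hle⟩ := gMinus_segment c ε x' k₀ (lt_of_lt_of_le hh hm)
      refine ⟨a, ha, Or.inr ?_⟩
      calc h ≤ gMinus c ε x' k₀ := hm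
        _ ≤ ∑ i ∈ Finset.Ico a k₀, (c - x' i - ε) := hle
        _ = _ := by rw [Finset.sum_Ico_eq_sum_range]
  obtain ⟨a, ha, hseg⟩ := hseg
  refine ⟨t + a, ?_, ?_, ⟨k₀ - a, Nat.sub_pos_of_lt ha, ?_⟩⟩
  · rw [← ENat.coe_toNat htj, ← ht_def]
    exact_mod_cast Nat.le_add_right t a
  · rw [hstep, hA_eq]
    have : ((t + a : ℕ) : ℕ∞) < ((t + k₀ : ℕ) : ℕ∞) := by
      exact_mod_cast Nat.add_lt_add_left ha t
    rw [Nat.cast_add] at this ⊢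
    exact this
  · have hrw : ∀ i, x' (a + i) = x ((t + a) + i) := by
      intro i
      show x (t + (a + i)) = x ((t + a) + i)
      rw [add_assoc]
    rcases hseg with hp | hm
    · refine Or.inl ?_
      calc h ≤ ∑ i ∈ Finset.range (k₀ - a), (x' (a+i) - c - ε) := hp
        _ = ∑ i ∈ Finset.range (k₀ - a), (x (t+a+i) - c - ε) :=
          Finset.sum_congr rfl (fun i _ => by rw [hrw])
    · refine Or.inr ?_
      calc h ≤ ∑ i ∈ Finset.range (k₀ - a), (c - x' (a+i) - ε) := hm
        _ = ∑ i ∈ Finset.range (k₀ - a), (c - x (t+a+i) - ε) :=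
          Finset.sum_congr rfl (fun i _ => by rw [hrw])

/-- Pointwise bound: the number of alarms by time `T` is at most the number of bad
indices below `T`. -/
lemma count_le_bad (y : ℕ → Ω → ℝ) (c ε h : ℝ) (hh : 0 < h) (T : ℕ) (ω : Ω) :
    (cusumAlarmCount c ε h (fun k => y k ω) T : ℝ≥0∞) ≤
      ∑ u ∈ Finset.range T, Set.indicator (badSet y c ε h u) (fun _ => (1:ℝ≥0∞)) ω := by
  classical
  set x := fun k => y k ω with hx_def
  set τ := cusumRestartTimes c ε h x with hτ_def
  -- choice of witness for each j
  have hch : ∀ j : ℕ, ∃ u : ℕ, (1 ≤ j ∧ τ j ≤ (T : ℕ∞)) →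
      (τ (j-1) ≤ (u : ℕ∞) ∧ (u : ℕ∞) < τ j ∧ ω ∈ badSet y c ε h u) := by
    intro j
    by_cases hj : 1 ≤ j ∧ τ j ≤ (T : ℕ∞)
    · obtain ⟨j', rfl⟩ : ∃ j', j = j' + 1 := ⟨j - 1, by omega⟩
      have hfin : τ (j'+1) ≠ ⊤ := by
        intro hcon
        rw [hcon] at hj
        exact absurd hj.2 (by simp)
      obtain ⟨u, hu1, hu2, hbad⟩ := restart_witness c ε h hh x j' hfin
      refine ⟨u, fun _ => ⟨?_, hu2, ?_⟩⟩
      · simpa using hu1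
      · exact hbad
    · exact ⟨0, fun hcon => absurd hcon hj⟩
  choose f hf using hch
  -- injective map into bad indices
  have hinj : ∀ j1 ∈ (Finset.Icc 1 T).filter (fun j => τ j ≤ (T : ℕ∞)),
      ∀ j2 ∈ (Finset.Icc 1 T).filter (fun j => τ j ≤ (T : ℕ∞)), f j1 = f j2 → j1 = j2 := by
    have hkey : ∀ j1 j2, j1 ∈ (Finset.Icc 1 T).filter (fun j => τ j ≤ (T : ℕ∞)) →
        j2 ∈ (Finset.Icc 1 T).filter (fun j => τ j ≤ (T : ℕ∞)) → j1 < j2 → f j1 < f j2 := by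
      intro j1 j2 hj1 hj2 hlt
      simp only [Finset.mem_filter, Finset.mem_Icc] at hj1 hj2
      obtain ⟨hle1, hlt1, _⟩ := hf j1 ⟨hj1.1.1, hj1.2⟩
      obtain ⟨hle2, hlt2, _⟩ := hf j2 ⟨hj2.1.1, hj2.2⟩
      have hchain : ((f j1 : ℕ∞)) < (f j2 : ℕ∞) := by
        calc (f j1 : ℕ∞) < τ j1 := hlt1
          _ ≤ τ (j2 - 1) := restart_mono c ε h x (by omega)
          _ ≤ (f j2 : ℕ∞) := hle2
      exact_mod_cast hchain
    intro j1 hj1 j2 hj2 heq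
    by_contra hne
    rcases lt_or_gt_of_ne hne with hlt | hlt
    · exact absurd heq (Nat.ne_of_lt (hkey j1 j2 hj1 hj2 hlt))
    · exact absurd heq.symm (Nat.ne_of_lt (hkey j2 j1 hj2 hj1 hlt))
  have hmaps : ∀ j ∈ (Finset.Icc 1 T).filter (fun j => τ j ≤ (T : ℕ∞)),
      f j ∈ (Finset.range T).filter (fun u => ω ∈ badSet y c ε h u) := by
    intro j hj
    simp only [Finset.mem_filter, Finset.mem_Icc] at hj
    obtain ⟨hle, hltτ, hbad⟩ := hf j ⟨hj.1.1, hj.2⟩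
    rw [Finset.mem_filter, Finset.mem_range]
    refine ⟨?_, hbad⟩
    have : (f j : ℕ∞) < (T : ℕ∞) := lt_of_lt_of_le hltτ hj.2
    exact_mod_cast this
  have hcard : ((Finset.Icc 1 T).filter (fun j => τ j ≤ (T : ℕ∞))).card ≤
      ((Finset.range T).filter (fun u => ω ∈ badSet y c ε h u)).card :=
    Finset.card_le_card_of_injOn f hmaps hinj
  have hcount : cusumAlarmCount c ε h x T =
      ((Finset.Icc 1 T).filter (fun j => τ j ≤ (T : ℕ∞))).card := by
    rw [cusumAlarmCount, hτ_def]
  have hrhs : ∑ u ∈ Finset.range T, Set.indicator (badSet y c ε h u) (fun _ => (1:ℝ≥0∞)) ω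
      = (((Finset.range T).filter (fun u => ω ∈ badSet y c ε h u)).card : ℝ≥0∞) := by
    simp only [Set.indicator_apply]
    rw [Finset.sum_boole]
  rw [hcount, hrhs]
  exact_mod_cast hcard

lemma conj_two (y : ℕ → Ω → ℝ) (c ε h : ℝ) {μ : Measure Ω} [IsProbabilityMeasure μ]
    (hmeas : ∀ k, Measurable (y k))
    (hindep : iIndepFun y μ)
    (hh : 0 < h) (rm rp r : ℝ) (hrm : 0 < rm) (hrp : 0 < rp) (hr : r = min rm rp)
    (hrootm : ∀ i, ∫⁻ ω, ENNReal.ofReal (Real.exp (rm * (c - y i ω - ε))) ∂μ = 1)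
    (hrootp : ∀ i, ∫⁻ ω, ENNReal.ofReal (Real.exp (rp * (y i ω - c - ε))) ∂μ = 1)
    (T : ℕ) :
    ∫⁻ ω, (cusumAlarmCount c ε h (fun k => y k ω) T : ℝ≥0∞) ∂μ ≤
      ENNReal.ofReal (2 * T / Real.exp (r * h)) := by
  have hstep1 : ∫⁻ ω, (cusumAlarmCount c ε h (fun k => y k ω) T : ℝ≥0∞) ∂μ ≤
      ∫⁻ ω, ∑ u ∈ Finset.range T, Set.indicator (badSet y c ε h u) (fun _ => (1:ℝ≥0∞)) ω ∂μ :=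
    lintegral_mono (fun ω => count_le_bad y c ε h hh T ω)
  have hstep2 : ∫⁻ ω, ∑ u ∈ Finset.range T,
      Set.indicator (badSet y c ε h u) (fun _ => (1:ℝ≥0∞)) ω ∂μ
      = ∑ u ∈ Finset.range T, μ (badSet y c ε h u) := by
    rw [lintegral_finset_sum _ (fun u _ =>
      measurable_const.indicator (badSet_meas y c ε h hmeas u))]
    congr 1
    ext u
    rw [lintegral_indicator_const (badSet_meas y c ε h hmeas u), one_mul]
  have hq : ∀ u, μ (badSet y c ε h u) ≤ ENNReal.ofReal (2 * Real.exp (-(r * h))) := by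
    intro u
    calc μ (badSet y c ε h u) ≤
        ENNReal.ofReal (Real.exp (-(rp * h))) + ENNReal.ofReal (Real.exp (-(rm * h))) :=
          badSet_measure_le y c ε h hmeas hindep hh rm rp hrm hrp hrootm hrootp u
      _ ≤ ENNReal.ofReal (2 * Real.exp (-(r * h))) := by
          rw [← ENNReal.ofReal_add (Real.exp_pos _).le (Real.exp_pos _).le]
          apply ENNReal.ofReal_le_ofReal
          have h1 : Real.exp (-(rp * h)) ≤ Real.exp (-(r * h)) := by
            apply Real.exp_le_exp.mpr
            have : r ≤ rp := by rw [hr]; exact min_le_right _ _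
            nlinarith
          have h2 : Real.exp (-(rm * h)) ≤ Real.exp (-(r * h)) := by
            apply Real.exp_le_exp.mpr
            have : r ≤ rm := by rw [hr]; exact min_le_left _ _
            nlinarith
          linarith
  calc ∫⁻ ω, (cusumAlarmCount c ε h (fun k => y k ω) T : ℝ≥0∞) ∂μ
      ≤ ∑ u ∈ Finset.range T, μ (badSet y c ε h u) := hstep1.trans (le_of_eq hstep2)
    _ ≤ ∑ _u ∈ Finset.range T, ENNReal.ofReal (2 * Real.exp (-(r * h))) :=
        Finset.sum_le_sum (fun u _ => hq u)
    _ = (T : ℝ≥0∞) * ENNReal.ofReal (2 * Real.exp (-(r * h))) := by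
        rw [Finset.sum_const, Finset.card_range, nsmul_eq_mul]
    _ = ENNReal.ofReal (2 * T / Real.exp (r * h)) := by
        rw [← ENNReal.ofReal_natCast T, ← ENNReal.ofReal_mul (Nat.cast_nonneg T)]
        congr 1
        rw [Real.exp_neg]
        field_simp

end Conj2
end CusumAux


/-- **False-alarm bound of Proposition 1.**  If `(y_k)` are i.i.d. with values in
`[0,1]` and mean `u₀`, the reference satisfies `|c - u₀| < ε`, and `r⁻, r⁺ > 0` are
the nonzero roots of the cumulant generating functions of the lower and upper steps,
then with `r = min r⁻ r⁺` the alarm time satisfies `E[H] ≥ exp (r h) / 2`, and for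
any horizon `T` the expected number of false alarms raised by repeatedly restarting
the procedure within `T` observations is at most `2 T / exp (r h)`. -/
theorem cusum_false_alarm_bound
    {Ω : Type*} [MeasurableSpace Ω] {μ : Measure Ω} [IsProbabilityMeasure μ]
    (y : ℕ → Ω → ℝ) (hmeas : ∀ k, Measurable (y k))
    (hindep : iIndepFun y μ)
    (hident : ∀ k, IdentDistrib (y k) (y 0) μ μ)
    (hrange : ∀ k ω, y k ω ∈ Set.Icc (0 : ℝ) 1)
    (u₀ : ℝ) (hmean : ∫ ω, y 0 ω ∂μ = u₀)
    (c ε h : ℝ) (hε : 0 < ε) (hh : 0 < h) (hclose : |c - u₀| < ε)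
    (rm rp : ℝ) (hrm : 0 < rm) (hrp : 0 < rp)
    (hrootm : ∫ ω, Real.exp (rm * (c - y 0 ω - ε)) ∂μ = 1)
    (hrootp : ∫ ω, Real.exp (rp * (y 0 ω - c - ε)) ∂μ = 1)
    (r : ℝ) (hr : r = min rm rp) :
    ENNReal.ofReal (Real.exp (r * h) / 2) ≤
        ∫⁻ ω, cusumAlarm c ε h (fun k => y k ω) ∂μ ∧
      ∀ T : ℕ,
        ∫⁻ ω, (cusumAlarmCount c ε h (fun k => y k ω) T : ℝ≥0∞) ∂μ ≤
          ENNReal.ofReal (2 * T / Real.exp (r * h)) := by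
  classical
  have hC : ∀ (ρ : ℝ) (i : ℕ) (ω : Ω) (g : ℝ → ℝ), (∀ t, 0 ≤ t → t ≤ 1 → |g t| ≤ 1 + |c| + ε) →
      Real.exp (ρ * g (y i ω)) ≤ Real.exp (|ρ| * (1 + |c| + ε)) := by
    intro ρ i ω g hg
    apply Real.exp_le_exp.mpr
    have hrange' := hrange i ω
    rw [Set.mem_Icc] at hrange'
    calc ρ * g (y i ω) ≤ |ρ * g (y i ω)| := le_abs_self _
      _ = |ρ| * |g (y i ω)| := abs_mul _ _
      _ ≤ |ρ| * (1 + |c| + ε) :=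
          mul_le_mul_of_nonneg_left (hg _ hrange'.1 hrange'.2) (abs_nonneg _)
  have habs : ∀ t : ℝ, 0 ≤ t → t ≤ 1 → |c - t - ε| ≤ 1 + |c| + ε := by
    intro t ht0 ht1
    rw [abs_le]
    constructor
    · have := le_abs_self c
      have := neg_abs_le c
      linarith
    · have := le_abs_self c
      have := neg_abs_le c
      linarith
  have habs' : ∀ t : ℝ, 0 ≤ t → t ≤ 1 → |t - c - ε| ≤ 1 + |c| + ε := by
    intro t ht0 ht1
    rw [abs_le]
    constructor
    · have := le_abs_self c
      have := neg_abs_le c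
      linarith
    · have := le_abs_self c
      have := neg_abs_le c
      linarith
  have hlift : ∀ (ρ : ℝ) (g : ℝ → ℝ), Measurable g → (∀ t, 0 ≤ t → t ≤ 1 → |g t| ≤ 1 + |c| + ε) →
      (∫ ω, Real.exp (ρ * g (y 0 ω)) ∂μ = 1) →
      ∀ i, ∫⁻ ω, ENNReal.ofReal (Real.exp (ρ * g (y i ω))) ∂μ = 1 := by
    intro ρ g hg hgb hroot i
    have hmeas_f : ∀ j, Measurable (fun ω => Real.exp (ρ * g (y j ω))) := fun j =>
      Real.measurable_exp.comp ((hg.comp (hmeas j)).const_mul ρ)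
    have hint : ∀ j, Integrable (fun ω => Real.exp (ρ * g (y j ω))) μ := by
      intro j
      apply Integrable.mono' (integrable_const (Real.exp (|ρ| * (1 + |c| + ε))))
        (hmeas_f j).aestronglyMeasurable
      apply Filter.Eventually.of_forall
      intro ω
      rw [Real.norm_eq_abs, abs_of_pos (Real.exp_pos _)]
      exact hC ρ j ω g hgb
    have hid : IdentDistrib (fun ω => Real.exp (ρ * g (y i ω)))
        (fun ω => Real.exp (ρ * g (y 0 ω))) μ μ :=
      (hident i).comp (Real.measurable_exp.comp (hg.const_mul ρ))
    have heq : ∫ ω, Real.exp (ρ * g (y i ω)) ∂μ = 1 := by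
      rw [hid.integral_eq]
      exact hroot
    rw [← MeasureTheory.ofReal_integral_eq_lintegral_ofReal (hint i)
      (Filter.Eventually.of_forall (fun ω => (Real.exp_pos _).le)), heq, ENNReal.ofReal_one]
  have hrootm' : ∀ i, ∫⁻ ω, ENNReal.ofReal (Real.exp (rm * (c - y i ω - ε))) ∂μ = 1 :=
    hlift rm (fun t => c - t - ε) ((measurable_const.sub measurable_id).sub_const ε)
      habs hrootm
  have hrootp' : ∀ i, ∫⁻ ω, ENNReal.ofReal (Real.exp (rp * (y i ω - c - ε))) ∂μ = 1 :=
    hlift rp (fun t => t - c - ε) ((measurable_id.sub_const c).sub_const ε)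
      habs' hrootp
  constructor
  · exact CusumAux.conj_one y c ε h hmeas hindep hh rm rp r hrm hrp hr hrootm' hrootp'
  · intro T
    exact CusumAux.conj_two y c ε h hmeas hindep hh rm rp r hrm hrp hr hrootm' hrootp' T
end

section
/- Let ε ∈ (0, 1/4], let M be a positive integer with M·ε ≥ 1, and let u₀ ∈ (2ε, 1 − 2ε). Let û₀ be the empirical mean of M i.i.d. Bernoulli(u₀) random variables. Then the event {|û₀ − u₀| < ε} has positive probability and E[(û₀ − ε)^{−1} | |û₀ − u₀| < ε] ≥ ε/(u₀·(u₀ − ε))·C(M, ⌊2εM⌋)·(2ε)^M + 1/u₀, where C(M, k) denotes the binomial coefficient. -/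
open MeasureTheory ProbabilityTheory
open scoped ENNReal

/-- The Bernoulli distribution with parameter `p`, as a measure on `ℝ`
(mass `p` at `1` and mass `1 - p` at `0`). -/
noncomputable def bernoulliReal (p : ℝ) : Measure ℝ :=
  ENNReal.ofReal p • Measure.dirac 1 + ENNReal.ofReal (1 - p) • Measure.dirac 0

lemma choose_le_half_aux {n a b : ℕ} (hab : a ≤ b) (hb : b ≤ n / 2) :
    n.choose a ≤ n.choose b := by
  induction b with
  | zero => exact Nat.le_of_eq (by rw [Nat.le_zero.mp hab])
  | succ b ih =>
    rcases Nat.lt_or_ge a (b+1) with h | h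
    · exact (ih (Nat.lt_succ_iff.mp h) (le_trans (Nat.le_succ b) hb)).trans
        (Nat.choose_le_succ_of_lt_half_left (by omega))
    · have : a = b + 1 := le_antisymm hab h
      subst this; exact le_refl _

lemma choose_le_of_le_sub_aux {n a b : ℕ} (hab : a ≤ b) (hb : b ≤ n - a) :
    n.choose a ≤ n.choose b := by
  rcases le_or_gt b (n / 2) with h | h
  · exact choose_le_half_aux hab h
  · have hbn : b ≤ n := le_trans hb (Nat.sub_le n a)
    rw [← Nat.choose_symm hbn]
    exact choose_le_half_aux (by omega) (by omega)

lemma pattern_measure {Ω : Type*} [MeasurableSpace Ω] {μ : Measure Ω}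
    (M : ℕ) (u₀ : ℝ)
    (y : Fin M → Ω → ℝ) (hmeas : ∀ k, Measurable (y k))
    (hindep : iIndepFun y μ)
    (hdist : ∀ k, Measure.map (y k) μ = bernoulliReal u₀)
    (S : Finset (Fin M)) :
    μ {ω | ∀ i, y i ω = if i ∈ S then (1:ℝ) else 0}
      = ENNReal.ofReal u₀ ^ S.card * ENNReal.ofReal (1-u₀) ^ (M - S.card) := by
  have hone : ∀ i, μ ((y i) ⁻¹' {1}) = ENNReal.ofReal u₀ := fun i => by
    rw [← Measure.map_apply (hmeas i) (measurableSet_singleton 1), hdist i]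
    simp [bernoulliReal]
  have hzero : ∀ i, μ ((y i) ⁻¹' {0}) = ENNReal.ofReal (1 - u₀) := fun i => by
    rw [← Measure.map_apply (hmeas i) (measurableSet_singleton 0), hdist i]
    simp [bernoulliReal]
  have hset : {ω | ∀ i, y i ω = if i ∈ S then (1:ℝ) else 0}
      = ⋂ i, (y i) ⁻¹' {if i ∈ S then (1:ℝ) else 0} := by
    ext ω; simp [Set.mem_iInter]
  rw [hset, hindep.meas_iInter (fun i => ⟨{if i ∈ S then (1:ℝ) else 0},
    measurableSet_singleton _, rfl⟩)]
  calc ∏ i, μ ((y i) ⁻¹' {if i ∈ S then (1:ℝ) else 0})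
      = ∏ i : Fin M, (if i ∈ S then ENNReal.ofReal u₀ else ENNReal.ofReal (1-u₀)) := by
        refine Finset.prod_congr rfl fun i _ => ?_
        by_cases h : i ∈ S <;> simp [h, hone i, hzero i]
    _ = ENNReal.ofReal u₀ ^ S.card * ENNReal.ofReal (1-u₀) ^ (M - S.card) := by
        rw [Finset.prod_ite, Finset.prod_const, Finset.prod_const]
        congr 1
        · congr 1
          rw [Finset.filter_mem_eq_inter, Finset.univ_inter]
        · congr 1
          have : Finset.filter (fun i => i ∉ S) Finset.univ = Finset.univ \ S := by
            ext i; simp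
          rw [this, Finset.card_sdiff_of_subset (Finset.subset_univ S)]
          simp

/-- **Conditional-expectation lower bound** from the proof of Theorem 2 (case
`|û₀ - u₀| < ε`): with `û₀` the empirical mean of `M` i.i.d. Bernoulli(`u₀`)
variables and `A = {|û₀ - u₀| < ε}`, the event `A` has positive probability and
`E[(û₀ - ε)⁻¹ | A] ≥ ε / (u₀ (u₀ - ε)) · C(M, ⌊2εM⌋) · (2ε)^M + 1 / u₀`. -/
theorem conditional_inv_lower_bound
    {Ω : Type*} [MeasurableSpace Ω] {μ : Measure Ω} [IsProbabilityMeasure μ]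
    (ε : ℝ) (hε : 0 < ε) (hε4 : ε ≤ 1 / 4)
    (M : ℕ) (hM : 0 < M) (hMε : 1 ≤ (M : ℝ) * ε)
    (u₀ : ℝ) (hu₀ : u₀ ∈ Set.Ioo (2 * ε) (1 - 2 * ε))
    (y : Fin M → Ω → ℝ) (hmeas : ∀ k, Measurable (y k))
    (hindep : iIndepFun y μ)
    (hdist : ∀ k, Measure.map (y k) μ = bernoulliReal u₀)
    (uhat : Ω → ℝ) (huhat : ∀ ω, uhat ω = (∑ k, y k ω) / M)
    (A : Set Ω) (hA : A = {ω | |uhat ω - u₀| < ε}) :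
    0 < μ A ∧
      ε / (u₀ * (u₀ - ε)) * (M.choose ⌊2 * ε * M⌋₊ : ℝ) * (2 * ε) ^ M + 1 / u₀ ≤
        ∫ ω, (uhat ω - ε)⁻¹ ∂(μ[|A]) := by
  obtain ⟨hu₁, hu₂⟩ := hu₀
  have hMpos : (0:ℝ) < M := Nat.cast_pos.mpr hM
  have hu₀pos : 0 < u₀ := lt_trans (by positivity) hu₁
  have hu₀εpos : 0 < u₀ - ε := by linarith
  have hu₀2εpos : 0 < u₀ - 2*ε := by linarith
  have h1u₀ : 0 < 1 - u₀ := by linarith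
  -- the special value k
  set k : ℕ := ⌊u₀ * M⌋₊ with hkdef
  have hkM : (k : ℝ) ≤ u₀ * M := Nat.floor_le (by positivity)
  have hkM' : u₀ * M - 1 < (k : ℝ) := Nat.sub_one_lt_floor _
  have hkle : k ≤ M := by
    have : (k:ℝ) ≤ M := hkM.trans (by nlinarith)
    exact_mod_cast this
  have hεM : 1 / (M:ℝ) ≤ ε := by rw [div_le_iff₀ hMpos]; linarith
  have hkdivle : (k:ℝ) / M ≤ u₀ := by rw [div_le_iff₀ hMpos]; linarith
  have hkdivgt : u₀ - ε < (k:ℝ) / M := by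
    rw [lt_div_iff₀ hMpos]; nlinarith
  -- k' and the choose comparison
  set k' : ℕ := ⌊2 * ε * M⌋₊ with hk'def
  have hk'k : k' ≤ k := Nat.floor_le_floor (by nlinarith)
  have hk'M : (k':ℝ) ≤ 2 * ε * M := Nat.floor_le (by positivity)
  have hkMk' : k ≤ M - k' := by
    have h1 : (k:ℝ) + (k':ℝ) < M := by nlinarith
    have : k + k' < M := by exact_mod_cast h1
    omega
  have hchoose : (M.choose k' : ℝ) ≤ M.choose k := by
    exact_mod_cast choose_le_of_le_sub_aux hk'k hkMk'
  -- measurability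
  have huhat_meas : Measurable uhat := by
    have : uhat = fun ω => (∑ i, y i ω) / M := funext huhat
    rw [this]
    exact (Finset.measurable_sum Finset.univ fun i _ => hmeas i).div_const _
  have hAmeas : MeasurableSet A := by
    rw [hA]
    exact measurableSet_lt ((huhat_meas.sub measurable_const).abs) measurable_const
  -- the event B
  set B : Set Ω := {ω | ∑ i, y i ω = (k:ℝ)} with hBdef
  have hBmeas : MeasurableSet B :=
    (Finset.measurable_sum Finset.univ fun i _ => hmeas i) (measurableSet_singleton _)
  have hBA : B ⊆ A := by
    intro ω hω
    rw [hA]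
    simp only [Set.mem_setOf_eq] at hω ⊢
    rw [huhat ω, hω, abs_lt]
    constructor
    · linarith [hkdivle]
    · linarith [hkdivgt]
  -- lower bound on μ B
  set E : Finset (Fin M) → Set Ω :=
    fun S => {ω | ∀ i, y i ω = if i ∈ S then (1:ℝ) else 0} with hEdef
  have hEmeas : ∀ S, MeasurableSet (E S) := by
    intro S
    have : E S = ⋂ i, (y i) ⁻¹' {if i ∈ S then (1:ℝ) else 0} := by
      ext ω; simp [hEdef, Set.mem_iInter]
    rw [this]
    exact MeasurableSet.iInter fun i => (hmeas i) (measurableSet_singleton _)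
  set P := Finset.powersetCard k (Finset.univ : Finset (Fin M)) with hPdef
  have hdisj : (P : Set (Finset (Fin M))).PairwiseDisjoint E := by
    intro S hS T hT hST
    refine Set.disjoint_left.mpr fun ω hS' hT' => hST ?_
    have hS'' : ∀ i, y i ω = if i ∈ S then (1:ℝ) else 0 := hS'
    have hT'' : ∀ i, y i ω = if i ∈ T then (1:ℝ) else 0 := hT'
    have hSiff : ∀ i, i ∈ S ↔ y i ω = 1 := fun i => by
      by_cases h : i ∈ S <;> norm_num [h, hS'' i]
    have hTiff : ∀ i, i ∈ T ↔ y i ω = 1 := fun i => by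
      by_cases h : i ∈ T <;> norm_num [h, hT'' i]
    exact Finset.ext fun i => (hSiff i).trans (hTiff i).symm
  have hsub : ∀ S ∈ P, E S ⊆ B := by
    intro S hS ω hω
    have hcard : S.card = k := (Finset.mem_powersetCard.mp hS).2
    have hω' : ∀ i, y i ω = if i ∈ S then (1:ℝ) else 0 := hω
    simp only [hBdef, Set.mem_setOf_eq]
    calc ∑ i, y i ω = ∑ i : Fin M, (if i ∈ S then (1:ℝ) else 0) :=
          Finset.sum_congr rfl fun i _ => hω' i
      _ = (k:ℝ) := by
          rw [Finset.sum_ite_mem, Finset.univ_inter, Finset.sum_const, hcard]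
          simp
  have hμB : ENNReal.ofReal ((M.choose k : ℝ) * (u₀ ^ k * (1 - u₀) ^ (M - k))) ≤ μ B := by
    have hsum : ∑ S ∈ P, μ (E S)
        = (M.choose k) • (ENNReal.ofReal u₀ ^ k * ENNReal.ofReal (1-u₀) ^ (M - k)) := by
      rw [Finset.sum_congr rfl fun S hS => by
        rw [pattern_measure M u₀ y hmeas hindep hdist S,
          (Finset.mem_powersetCard.mp hS).2]]
      rw [Finset.sum_const, hPdef, Finset.card_powersetCard, Finset.card_univ,
        Fintype.card_fin]
    have hofR : ENNReal.ofReal ((M.choose k : ℝ) * (u₀ ^ k * (1 - u₀) ^ (M - k)))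
        = (M.choose k) • (ENNReal.ofReal u₀ ^ k * ENNReal.ofReal (1-u₀) ^ (M - k)) := by
      rw [ENNReal.ofReal_mul (by positivity), ENNReal.ofReal_mul (by positivity),
        ← ENNReal.ofReal_pow hu₀pos.le, ← ENNReal.ofReal_pow h1u₀.le,
        ENNReal.ofReal_natCast, nsmul_eq_mul]
    calc ENNReal.ofReal ((M.choose k : ℝ) * (u₀ ^ k * (1 - u₀) ^ (M - k)))
        = ∑ S ∈ P, μ (E S) := by rw [hofR, hsum]
      _ = μ (⋃ S ∈ P, E S) := (measure_biUnion_finset hdisj fun S _ => hEmeas S).symm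
      _ ≤ μ B := measure_mono (Set.iUnion₂_subset hsub)
  have hrpos : 0 < (M.choose k : ℝ) * (u₀ ^ k * (1 - u₀) ^ (M - k)) := by
    have : 0 < M.choose k := Nat.choose_pos hkle
    positivity
  have hμBpos : 0 < μ B := lt_of_lt_of_le (by simpa using ENNReal.ofReal_pos.mpr hrpos) hμB
  have hApos : 0 < μ A := lt_of_lt_of_le hμBpos (measure_mono hBA)
  have hA0 : μ A ≠ 0 := hApos.ne'
  refine ⟨hApos, ?_⟩
  haveI : IsProbabilityMeasure (μ[|A]) := cond_isProbabilityMeasure hA0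
  -- pointwise bounds
  have hae : ∀ᵐ ω ∂(μ[|A]), ω ∈ A := by
    rw [Filter.eventually_iff, mem_ae_iff]
    have : {ω | ω ∈ A}ᶜ = Aᶜ := rfl
    rw [this, cond_apply hAmeas, Set.inter_compl_self, measure_empty, mul_zero]
  set c₂ : ℝ := ε / (u₀ * (u₀ - ε)) with hc₂def
  have hc₂pos : 0 < c₂ := by positivity
  set g : Ω → ℝ := fun ω => u₀⁻¹ + B.indicator (fun _ => c₂) ω with hgdef
  have hkey : (u₀ - ε)⁻¹ = u₀⁻¹ + c₂ := by
    rw [hc₂def]; field_simp; ring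
  have hfA : ∀ ω ∈ A, g ω ≤ (uhat ω - ε)⁻¹ ∧ (uhat ω - ε)⁻¹ ≤ (u₀ - 2*ε)⁻¹ := by
    intro ω hω
    rw [hA] at hω
    simp only [Set.mem_setOf_eq, abs_lt] at hω
    have h1 : u₀ - 2*ε < uhat ω - ε := by linarith [hω.1]
    have h2 : uhat ω - ε < u₀ := by linarith [hω.2]
    have hpos : 0 < uhat ω - ε := lt_trans hu₀2εpos h1
    constructor
    · by_cases hωB : ω ∈ B
      · have : uhat ω ≤ u₀ := by
          rw [huhat ω, hωB]; exact hkdivle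
        have : uhat ω - ε ≤ u₀ - ε := by linarith
        calc g ω = (u₀ - ε)⁻¹ := by
              rw [hgdef]; simp [Set.indicator_of_mem hωB, hkey]
          _ ≤ (uhat ω - ε)⁻¹ := by
              apply inv_anti₀ hpos this
      · calc g ω = u₀⁻¹ := by rw [hgdef]; simp [Set.indicator_of_notMem hωB]
          _ ≤ (uhat ω - ε)⁻¹ := by
              apply inv_anti₀ hpos h2.le
    · apply inv_anti₀ hu₀2εpos h1.le
  -- integrability
  have hfmeas : Measurable fun ω => (uhat ω - ε)⁻¹ :=
    (huhat_meas.sub measurable_const).inv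
  have hint_f : Integrable (fun ω => (uhat ω - ε)⁻¹) (μ[|A]) := by
    refine Integrable.mono' (integrable_const ((u₀ - 2*ε)⁻¹)) hfmeas.aestronglyMeasurable ?_
    filter_upwards [hae] with ω hω
    have h := hfA ω hω
    have hgpos : 0 < g ω := by
      rw [hgdef]
      have : (0:ℝ) ≤ B.indicator (fun _ => c₂) ω :=
        Set.indicator_nonneg (fun _ _ => hc₂pos.le) ω
      positivity
    rw [Real.norm_eq_abs, abs_of_pos (lt_of_lt_of_le hgpos h.1)]
    exact h.2
  have hint_g : Integrable g (μ[|A]) :=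
    (integrable_const _).add ((integrable_const c₂).indicator hBmeas)
  -- integral comparison
  have hmono : ∫ ω, g ω ∂(μ[|A]) ≤ ∫ ω, (uhat ω - ε)⁻¹ ∂(μ[|A]) := by
    refine integral_mono_ae hint_g hint_f ?_
    filter_upwards [hae] with ω hω
    exact (hfA ω hω).1
  have hgint : ∫ ω, g ω ∂(μ[|A]) = u₀⁻¹ + c₂ * ((μ[|A]) B).toReal := by
    rw [hgdef]
    rw [integral_add (integrable_const _) ((integrable_const c₂).indicator hBmeas)]
    rw [integral_const, integral_indicator_const _ hBmeas]
    simp [mul_comm]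
    left; rfl
  -- bound on conditional measure of B
  have hcondB : ((μ[|A]) B).toReal ≥ (M.choose k' : ℝ) * (2*ε) ^ M := by
    have h1 : μ B ≤ (μ[|A]) B := by
      rw [cond_apply hAmeas, Set.inter_eq_self_of_subset_right hBA]
      nth_rewrite 1 [← one_mul (μ B)]
      apply mul_le_mul_left
      rw [ENNReal.one_le_inv]
      exact prob_le_one
    have h2 : (μ B).toReal ≤ ((μ[|A]) B).toReal :=
      ENNReal.toReal_mono (measure_ne_top _ _) h1
    have h3 : (M.choose k : ℝ) * (u₀ ^ k * (1 - u₀) ^ (M - k)) ≤ (μ B).toReal := by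
      have := ENNReal.toReal_mono (measure_ne_top _ _) hμB
      rwa [ENNReal.toReal_ofReal hrpos.le] at this
    have h4 : (M.choose k' : ℝ) * (2*ε) ^ M
        ≤ (M.choose k : ℝ) * (u₀ ^ k * (1 - u₀) ^ (M - k)) := by
      have hpow : (2*ε) ^ M ≤ u₀ ^ k * (1 - u₀) ^ (M - k) := by
        have hsplit : (2*ε) ^ M = (2*ε) ^ k * (2*ε) ^ (M - k) := by
          rw [← pow_add, Nat.add_sub_cancel' hkle]
        rw [hsplit]
        exact mul_le_mul (pow_le_pow_left₀ (by positivity) hu₁.le k)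
          (pow_le_pow_left₀ (by positivity) (by linarith) (M - k))
          (by positivity) (by positivity)
      calc (M.choose k' : ℝ) * (2*ε) ^ M ≤ (M.choose k : ℝ) * (2*ε) ^ M :=
            mul_le_mul_of_nonneg_right hchoose (by positivity)
        _ ≤ (M.choose k : ℝ) * (u₀ ^ k * (1 - u₀) ^ (M - k)) :=
            mul_le_mul_of_nonneg_left hpow (by positivity)
    linarith
  calc ε / (u₀ * (u₀ - ε)) * (M.choose k' : ℝ) * (2 * ε) ^ M + 1 / u₀
      ≤ u₀⁻¹ + c₂ * ((μ[|A]) B).toReal := by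
        rw [one_div]
        have h5 : c₂ * ((M.choose k' : ℝ) * (2*ε) ^ M) ≤ c₂ * ((μ[|A]) B).toReal :=
          mul_le_mul_of_nonneg_left hcondB hc₂pos.le
        have h6 : ε / (u₀ * (u₀ - ε)) * (M.choose k' : ℝ) * (2 * ε) ^ M
            = c₂ * ((M.choose k' : ℝ) * (2*ε) ^ M) := by rw [hc₂def]; ring
        linarith [h5, h6.le]
    _ = ∫ ω, g ω ∂(μ[|A]) := hgint.symm
    _ ≤ _ := hmono
end

section
/- Let ε ∈ (0, 1/4], let M be a positive integer with M·ε ≥ 1, and let u₀ ∈ (2ε, 1 − 2ε). Let û₀ be the empirical mean of M i.i.d. Bernoulli(u₀) random variables. Then the event {|û₀ − u₀| < ε} has positive probability and E[(û₀ + ε)^{−1} | |û₀ − u₀| < ε] ≤ −ε/(u₀·(u₀ + ε))·C(M, ⌈2εM⌉)·(2ε)^M + 1/u₀, where C(M, k) denotes the binomial coefficient. -/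
open MeasureTheory ProbabilityTheory
open scoped ENNReal

open MeasureTheory ProbabilityTheory Finset
set_option linter.unusedSectionVars false

lemma bernoulliReal_one (p : ℝ) : bernoulliReal p {1} = ENNReal.ofReal p := by
  simp [bernoulliReal, Measure.dirac_apply' _ (measurableSet_singleton _)]

lemma bernoulliReal_zero (p : ℝ) : bernoulliReal p {0} = ENNReal.ofReal (1-p) := by
  simp [bernoulliReal, Measure.dirac_apply' _ (measurableSet_singleton _)]

lemma choose_mono_aux (M : ℕ) : ∀ b ≤ M/2, ∀ a ≤ b, M.choose a ≤ M.choose b := by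
  intro b
  induction b with
  | zero => intro _ a ha; interval_cases a; rfl
  | succ n ih =>
    intro hb a ha
    rcases Nat.lt_or_ge a (n+1) with h | h
    · exact le_trans (ih (by omega) a (by omega)) (Nat.choose_le_succ_of_lt_half_left (by omega))
    · have : a = n+1 := by omega
      simp [this]

lemma choose_mono_mid {M k j : ℕ} (hkj : k ≤ j) (hjM : j + k ≤ M) : M.choose k ≤ M.choose j := by
  rcases Nat.lt_or_ge (M/2) j with h | h
  · have h1 : M.choose j = M.choose (M - j) := (Nat.choose_symm (by omega)).symm
    rw [h1]
    exact choose_mono_aux M (M - j) (by omega) k (by omega)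
  · exact choose_mono_aux M j h k hkj

section Atoms

variable {Ω : Type*} [MeasurableSpace Ω] {μ : Measure Ω} [IsProbabilityMeasure μ]
  {M : ℕ} (y : Fin M → Ω → ℝ)

/-- the event that `y k = 1` exactly for `k ∈ T`. -/
def atomSet (T : Finset (Fin M)) : Set Ω :=
  ⋂ k ∈ Finset.univ, y k ⁻¹' {if k ∈ T then (1:ℝ) else 0}

/-- the event that exactly `j` of the `y k` equal `1` (and the rest equal `0`). -/
def countSet (j : ℕ) : Set Ω :=
  ⋃ T ∈ Finset.powersetCard j (Finset.univ : Finset (Fin M)), atomSet y T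

lemma mem_atomSet {T : Finset (Fin M)} {ω : Ω} :
    ω ∈ atomSet y T ↔ ∀ k, y k ω = if k ∈ T then (1:ℝ) else 0 := by
  simp [atomSet]

lemma atomSet_measurable (hmeas : ∀ k, Measurable (y k)) (T : Finset (Fin M)) : MeasurableSet (atomSet y T) :=
  MeasurableSet.biInter (Set.to_countable _)
    (fun k _ => (hmeas k) (measurableSet_singleton _))

lemma atomSet_disjoint {T T' : Finset (Fin M)} (h : T ≠ T') :
    Disjoint (atomSet y T) (atomSet y T') := by
  rw [Set.disjoint_left]
  intro ω hT hT'
  rw [mem_atomSet] at hT hT'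
  apply h
  ext k
  by_contra hc
  have h1 := hT k
  have h2 := hT' k
  rcases Classical.em (k ∈ T) with hm | hm <;> rcases Classical.em (k ∈ T') with hm' | hm' <;>
    simp [hm, hm'] at hc h1 h2 <;> rw [h1] at h2 <;> norm_num at h2

lemma sum_eq_of_mem_atomSet {T : Finset (Fin M)} {ω : Ω} (hω : ω ∈ atomSet y T) :
    ∑ k, y k ω = T.card := by
  rw [mem_atomSet] at hω
  rw [Finset.sum_congr rfl (fun k _ => hω k)]
  rw [Finset.sum_ite_mem, Finset.univ_inter, Finset.sum_const, nsmul_eq_mul, mul_one]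

lemma countSet_measurable (hmeas : ∀ k, Measurable (y k)) (j : ℕ) : MeasurableSet (countSet y j) :=
  MeasurableSet.biUnion (Set.to_countable _) (fun T _ => atomSet_measurable y hmeas T)

lemma sum_eq_of_mem_countSet {j : ℕ} {ω : Ω} (hω : ω ∈ countSet y j) :
    ∑ k, y k ω = j := by
  rw [countSet, Set.mem_iUnion₂] at hω
  obtain ⟨T, hT, hωT⟩ := hω
  rw [Finset.mem_powersetCard] at hT
  rw [sum_eq_of_mem_atomSet y hωT, hT.2]

variable {u₀ : ℝ}

lemma atomSet_prob (hmeas : ∀ k, Measurable (y k))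
    (hindep : iIndepFun y μ)
    (hdist : ∀ k, Measure.map (y k) μ = bernoulliReal u₀) (T : Finset (Fin M)) :
    μ (atomSet y T) = ENNReal.ofReal u₀ ^ T.card * ENNReal.ofReal (1-u₀) ^ (M - T.card) := by
  rw [atomSet, hindep.measure_inter_preimage_eq_mul Finset.univ
    (sets := fun k => {if k ∈ T then (1:ℝ) else 0}) (fun i _ => measurableSet_singleton _)]
  have hsing : ∀ (k : Fin M) (r : ℝ), μ (y k ⁻¹' {r}) = bernoulliReal u₀ {r} := by
    intro k r
    rw [← hdist k, Measure.map_apply (hmeas k) (measurableSet_singleton _)]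
  have heach : ∀ k : Fin M, μ (y k ⁻¹' {if k ∈ T then (1:ℝ) else 0}) =
      if k ∈ T then ENNReal.ofReal u₀ else ENNReal.ofReal (1-u₀) := by
    intro k
    by_cases h : k ∈ T <;> simp [h, hsing, bernoulliReal_one, bernoulliReal_zero]
  rw [Finset.prod_congr rfl (fun k _ => heach k), ← Finset.prod_mul_prod_compl T]
  rw [Finset.prod_ite_of_true (fun k hk => hk),
    Finset.prod_ite_of_false (fun k hk => by simpa using hk)]
  rw [Finset.prod_const, Finset.prod_const, Finset.card_compl, Fintype.card_fin]

lemma countSet_prob (hmeas : ∀ k, Measurable (y k))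
    (hindep : iIndepFun y μ)
    (hdist : ∀ k, Measure.map (y k) μ = bernoulliReal u₀) (j : ℕ) :
    μ (countSet y j) = (M.choose j) *
      (ENNReal.ofReal u₀ ^ j * ENNReal.ofReal (1-u₀) ^ (M - j)) := by
  rw [countSet, measure_biUnion_finset ?_ (fun T _ => atomSet_measurable y hmeas T)]
  · rw [Finset.sum_congr rfl (fun T hT => ?_)]
    · rw [Finset.sum_const, Finset.card_powersetCard, Finset.card_univ, Fintype.card_fin,
        nsmul_eq_mul]
    · rw [atomSet_prob y hmeas hindep hdist T,
        (Finset.mem_powersetCard.1 hT).2]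
  · intro T hT T' hT' hne
    exact atomSet_disjoint y hne

end Atoms

set_option maxHeartbeats 1000000

/-- **Conditional-expectation upper bound** from the proof of Theorem 2 (case
`|û₀ - u₀| < ε`): with `û₀` the empirical mean of `M` i.i.d. Bernoulli(`u₀`)
variables and `A = {|û₀ - u₀| < ε}`, the event `A` has positive probability and
`E[(û₀ + ε)⁻¹ | A] ≤ -ε / (u₀ (u₀ + ε)) · C(M, ⌈2εM⌉) · (2ε)^M + 1 / u₀`. -/
theorem conditional_inv_upper_bound
    {Ω : Type*} [MeasurableSpace Ω] {μ : Measure Ω} [IsProbabilityMeasure μ]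
    (ε : ℝ) (hε : 0 < ε) (hε4 : ε ≤ 1 / 4)
    (M : ℕ) (hM : 0 < M) (hMε : 1 ≤ (M : ℝ) * ε)
    (u₀ : ℝ) (hu₀ : u₀ ∈ Set.Ioo (2 * ε) (1 - 2 * ε))
    (y : Fin M → Ω → ℝ) (hmeas : ∀ k, Measurable (y k))
    (hindep : iIndepFun y μ)
    (hdist : ∀ k, Measure.map (y k) μ = bernoulliReal u₀)
    (uhat : Ω → ℝ) (huhat : ∀ ω, uhat ω = (∑ k, y k ω) / M)
    (A : Set Ω) (hA : A = {ω | |uhat ω - u₀| < ε}) :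
    0 < μ A ∧
      ∫ ω, (uhat ω + ε)⁻¹ ∂(μ[|A]) ≤
        -ε / (u₀ * (u₀ + ε)) * (M.choose ⌈2 * ε * M⌉₊ : ℝ) * (2 * ε) ^ M + 1 / u₀ := by
  obtain ⟨hu1, hu2⟩ := hu₀
  have hu0 : 0 < u₀ := by linarith
  have hq0 : 0 < 1 - u₀ := by linarith
  have hM0 : (0:ℝ) < M := by exact_mod_cast hM
  set k := ⌈2 * ε * (M:ℝ)⌉₊ with hkdef
  set j := ⌈(M:ℝ) * u₀⌉₊ with hjdef
  have hjl : (M:ℝ) * u₀ ≤ j := Nat.le_ceil _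
  have hjub : (j:ℝ) < (M:ℝ) * u₀ + 1 := Nat.ceil_lt_add_one (by positivity)
  have hjM : j ≤ M := Nat.ceil_le.2 (by nlinarith)
  have hkj : k ≤ j := Nat.ceil_le_ceil (by nlinarith)
  have hkl : 2*ε*(M:ℝ) ≤ k := Nat.le_ceil _
  have hkub : (k:ℝ) < 2*ε*(M:ℝ) + 1 := Nat.ceil_lt_add_one (by positivity)
  set x := (j:ℝ)/M with hxdef
  have hxu : u₀ ≤ x := by rw [hxdef, le_div_iff₀ hM0]; linarith
  have ht0 : 0 ≤ x - u₀ := by linarith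
  have htε : x - u₀ < ε := by
    have h1 : x - u₀ < 1/(M:ℝ) := by
      rw [hxdef, div_sub' hM0.ne', div_lt_div_iff₀ hM0 hM0]
      nlinarith
    have h2 : 1/(M:ℝ) ≤ ε := by rw [div_le_iff₀ hM0]; linarith
    linarith
  have hmuhat : Measurable uhat := by
    have huq : uhat = fun ω => (∑ k, y k ω)/M := funext huhat
    rw [huq]
    exact (Finset.measurable_sum _ (fun i _ => hmeas i)).div_const _
  have hAmeas : MeasurableSet A := by
    rw [hA]
    exact measurableSet_lt ((hmuhat.sub measurable_const).abs) measurable_const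
  set B := countSet y j with hBdef
  have hBmeas : MeasurableSet B := countSet_measurable y hmeas j
  have hBμ : μ B = (M.choose j) *
      (ENNReal.ofReal u₀ ^ j * ENNReal.ofReal (1-u₀) ^ (M-j)) :=
    countSet_prob y hmeas hindep hdist j
  have hBuhat : ∀ ω ∈ B, uhat ω = x := by
    intro ω hω
    rw [huhat ω, sum_eq_of_mem_countSet y hω, hxdef]
  have hBA : B ⊆ A := by
    intro ω hω
    rw [hA]
    simp only [Set.mem_setOf_eq]
    rw [hBuhat ω hω, abs_lt]
    constructor <;> linarith
  have hPB : (μ B).toReal = (M.choose j) * (u₀^j * (1-u₀)^(M-j)) := by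
    rw [hBμ, ENNReal.toReal_mul, ENNReal.toReal_mul,
      ← ENNReal.ofReal_pow hu0.le, ← ENNReal.ofReal_pow hq0.le,
      ENNReal.toReal_ofReal (by positivity), ENNReal.toReal_ofReal (by positivity)]
    simp
  have hchoosejpos : 0 < (M.choose j : ℝ) := by exact_mod_cast Nat.choose_pos hjM
  have hPBpos : 0 < (μ B).toReal := by rw [hPB]; positivity
  have hμB : 0 < μ B := by
    rcases (zero_le : 0 ≤ μ B).lt_or_eq with h | h
    · exact h
    · rw [← h] at hPBpos; simp at hPBpos
  have hμA : 0 < μ A := lt_of_lt_of_le hμB (measure_mono hBA)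
  refine ⟨hμA, ?_⟩
  set c := 1/u₀ - 1/(x+ε) with hcdef
  have hxε : 0 < x + ε := by linarith
  have hc0 : 0 ≤ c := by
    rw [hcdef, sub_nonneg]
    exact one_div_le_one_div_of_le hu0 (by linarith)
  have hceq : c * (u₀ * (x+ε)) = x - u₀ + ε := by
    rw [hcdef]
    field_simp
    ring
  -- KEY INEQUALITY
  have hkey : ε/(u₀*(u₀+ε)) * (M.choose k) * (2*ε)^M ≤ c * (μ B).toReal := by
    rw [hPB]
    by_cases hcase : j + k ≤ M
    · -- good case
      have hchoose : (M.choose k : ℝ) ≤ M.choose j := by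
        exact_mod_cast choose_mono_mid hkj hcase
      have hpow : (2*ε)^M ≤ u₀^j * (1-u₀)^(M-j) := by
        have h1 : (2*ε)^j ≤ u₀^j := pow_le_pow_left₀ (by positivity) hu1.le j
        have h2 : (2*ε)^(M-j) ≤ (1-u₀)^(M-j) := pow_le_pow_left₀ (by positivity) (by linarith) _
        calc (2*ε)^M = (2*ε)^j * (2*ε)^(M-j) := by rw [← pow_add]; congr 1; omega
        _ ≤ u₀^j * (1-u₀)^(M-j) := mul_le_mul h1 h2 (by positivity) (by positivity)
      have hcge : ε/(u₀*(u₀+ε)) ≤ c := by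
        have hceq2 : c = (x-u₀+ε)/(u₀*(x+ε)) := by
          rw [eq_div_iff (by positivity)]
          exact hceq
        rw [hceq2, div_le_div_iff₀ (by positivity) (by positivity)]
        nlinarith [mul_nonneg (mul_nonneg ht0 hu0.le) hu0.le]
      calc ε/(u₀*(u₀+ε)) * (M.choose k) * (2*ε)^M
          = (ε/(u₀*(u₀+ε))) * ((M.choose k) * (2*ε)^M) := by ring
        _ ≤ c * ((M.choose j) * (u₀^j * (1-u₀)^(M-j))) :=
            mul_le_mul hcge
              (mul_le_mul hchoose hpow (by positivity) (by positivity))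
              (by positivity) hc0
    · -- bad case
      have hk2 : 1 < k := by
        rw [hkdef, Nat.lt_ceil]
        push_cast
        linarith
      have hjk1 : j + k = M + 1 := by
        have hMu2 : (M:ℝ)*u₀ < (M:ℝ) - 2*ε*(M:ℝ) := by nlinarith [mul_lt_mul_of_pos_left hu2 hM0]
        have hlt : (j:ℝ) + (k:ℝ) < (M:ℝ) + 2 := by linarith
        have hlt' : j + k < M + 2 := by exact_mod_cast hlt
        omega
      have hj1 : 1 ≤ j := by omega
      have hMj : M - j = k - 1 := by omega
      have hident : M.choose j * j = M.choose k * k := by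
        have h1 : M.choose j = M.choose (k-1) := by rw [← Nat.choose_symm hjM, hMj]
        have h2 := Nat.choose_succ_right_eq M (k-1)
        have hk1 : k - 1 + 1 = k := by omega
        rw [hk1] at h2
        have h3 : M - (k-1) = j := by omega
        rw [h3] at h2
        rw [h1, h2]
      have hCC : (M.choose j : ℝ) * j = (M.choose k : ℝ) * k := by exact_mod_cast hident
      have hjR : (j:ℝ) = M * x := by
        rw [hxdef]
        field_simp
      have hchoosekpos : 0 < (M.choose k : ℝ) := by
        exact_mod_cast Nat.choose_pos (le_trans hkj hjM)
      have hCjlb : (M.choose k : ℝ) * (2*ε) ≤ (M.choose j : ℝ) * x := by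
        have h3 : (M.choose j : ℝ) * x * M = (M.choose k : ℝ) * k := by
          rw [← hCC, hjR]; ring
        nlinarith [mul_le_mul_of_nonneg_left hkl hchoosekpos.le]
      have hx0 : 0 < x := lt_of_lt_of_le hu0 hxu
      have hgt : ε * (x*(x+ε)) ≤ (x-u₀+ε) * (u₀*(u₀+ε)) := by
        have key : 0 ≤ u₀^2 - ε*u₀ - ε*(x-u₀) - ε^2 := by nlinarith
        nlinarith [mul_nonneg ht0 key]
      have hpow : u₀ * (2*ε)^(M-1) ≤ u₀^j * (1-u₀)^(M-j) := by
        have h1 : (2*ε)^(M-1) ≤ u₀^(j-1) * (1-u₀)^(M-j) := by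
          have ha : (2*ε)^(j-1) ≤ u₀^(j-1) := pow_le_pow_left₀ (by positivity) hu1.le _
          have hb : (2*ε)^(M-j) ≤ (1-u₀)^(M-j) := pow_le_pow_left₀ (by positivity) (by linarith) _
          calc (2*ε)^(M-1) = (2*ε)^(j-1) * (2*ε)^(M-j) := by rw [← pow_add]; congr 1; omega
          _ ≤ _ := mul_le_mul ha hb (by positivity) (by positivity)
        have h2 : u₀ * u₀^(j-1) = u₀^j := by
          rw [← pow_succ']
          congr 1
          omega
        calc u₀ * (2*ε)^(M-1) ≤ u₀ * (u₀^(j-1) * (1-u₀)^(M-j)) :=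
              mul_le_mul_of_nonneg_left h1 hu0.le
        _ = u₀^j * (1-u₀)^(M-j) := by rw [← mul_assoc, h2]
      have hcoef : ε/(u₀*(u₀+ε)) * (M.choose k) * (2*ε) ≤ c * (M.choose j) * u₀ := by
        rw [div_mul_eq_mul_div, div_mul_eq_mul_div, div_le_iff₀ (by positivity)]
        have hprod : ((M.choose k : ℝ)*(2*ε)) * (ε*(x*(x+ε)))
            ≤ ((M.choose j : ℝ)*x) * ((x-u₀+ε)*(u₀*(u₀+ε))) :=
          mul_le_mul hCjlb hgt (by positivity) (by positivity)
        have hid : c * (M.choose j : ℝ) * u₀ * (u₀*(u₀+ε)) * (x*(x+ε))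
            = ((M.choose j : ℝ)*x) * ((x-u₀+ε)*(u₀*(u₀+ε))) := by
          rw [← hceq]
          ring
        nlinarith [mul_pos hx0 hxε]
      have hMpow : (2*ε)^M = (2*ε)*(2*ε)^(M-1) := by
        rw [← pow_succ']
        congr 1
        omega
      calc ε/(u₀*(u₀+ε)) * (M.choose k) * (2*ε)^M
          = (ε/(u₀*(u₀+ε)) * (M.choose k) * (2*ε)) * (2*ε)^(M-1) := by rw [hMpow]; ring
        _ ≤ (c * (M.choose j) * u₀) * (2*ε)^(M-1) :=
            mul_le_mul_of_nonneg_right hcoef (by positivity)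
        _ = (c * (M.choose j)) * (u₀ * (2*ε)^(M-1)) := by ring
        _ ≤ (c * (M.choose j)) * (u₀^j * (1-u₀)^(M-j)) :=
            mul_le_mul_of_nonneg_left hpow (by positivity)
        _ = c * ((M.choose j) * (u₀^j * (1-u₀)^(M-j))) := by ring
  -- INTEGRAL ESTIMATES
  set f := fun ω => (uhat ω + ε)⁻¹ with hfdef
  set g := fun ω => 1/u₀ - c * B.indicator (fun _ => (1:ℝ)) ω with hgdef
  have hfg : ∀ ω ∈ A, f ω ≤ g ω := by
    intro ω hω
    rw [hA] at hω
    simp only [Set.mem_setOf_eq] at hω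
    have h1 : u₀ < uhat ω + ε := by
      have := (abs_lt.1 hω).1
      linarith
    by_cases hωB : ω ∈ B
    · rw [hgdef]
      simp only [Set.indicator_of_mem hωB]
      have heq : 1/u₀ - c * 1 = (x+ε)⁻¹ := by
        rw [hcdef, one_div (x+ε)]
        ring
      rw [heq, hfdef]
      simp only
      rw [hBuhat ω hωB]
    · rw [hgdef]
      simp only [Set.indicator_of_notMem hωB, mul_zero, sub_zero, hfdef, one_div]
      exact inv_anti₀ hu0 h1.le
  have hfint : IntegrableOn f A μ := by
    apply Measure.integrableOn_of_bounded (M := u₀⁻¹) (measure_ne_top μ A)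
      ((hmuhat.add_const ε).inv.aestronglyMeasurable)
    filter_upwards [ae_restrict_mem hAmeas] with ω hω
    rw [hA] at hω
    simp only [Set.mem_setOf_eq] at hω
    have h1 : u₀ < uhat ω + ε := by
      have := (abs_lt.1 hω).1
      linarith
    rw [Real.norm_eq_abs]
    simp only [Pi.inv_apply]
    rw [abs_of_pos (inv_pos.2 (hu0.trans h1))]
    exact inv_anti₀ hu0 h1.le
  have hindint : Integrable (B.indicator (fun _ => (1:ℝ))) μ := by
    rw [integrable_indicator_iff hBmeas]
    exact integrableOn_const (measure_ne_top μ B)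
  have hgint : IntegrableOn g A μ := by
    have : g = (fun _ => 1/u₀) - fun ω => c * B.indicator (fun _ => (1:ℝ)) ω := rfl
    rw [this]
    exact (integrableOn_const (measure_ne_top μ A)).sub
      ((hindint.const_mul c).integrableOn)
  have hint_ind : ∫ ω in A, B.indicator (fun _ => (1:ℝ)) ω ∂μ = (μ B).toReal := by
    rw [integral_indicator hBmeas, Measure.restrict_restrict hBmeas,
      Set.inter_eq_self_of_subset_left hBA, setIntegral_const, smul_eq_mul, mul_one]
    rfl
  have hgcalc : ∫ ω in A, g ω ∂μ = (1/u₀) * (μ A).toReal - c * (μ B).toReal := by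
    rw [hgdef]
    rw [integral_sub (integrableOn_const (measure_ne_top μ A) : IntegrableOn (fun _ => 1/u₀) A μ)
      ((hindint.const_mul c).integrableOn)]
    rw [setIntegral_const, integral_const_mul, hint_ind, smul_eq_mul, measureReal_def]
    ring
  have hcond : ∫ ω, f ω ∂(μ[|A]) = (μ A)⁻¹.toReal * ∫ ω in A, f ω ∂μ := by
    rw [ProbabilityTheory.cond, integral_smul_measure, smul_eq_mul]
  have haR0 : 0 < (μ A).toReal := ENNReal.toReal_pos hμA.ne' (measure_ne_top μ A)
  have haR1 : (μ A).toReal ≤ 1 := by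
    calc (μ A).toReal ≤ (1:ℝ≥0∞).toReal := ENNReal.toReal_mono ENNReal.one_ne_top prob_le_one
    _ = 1 := ENNReal.toReal_one
  have hinv : (μ A)⁻¹.toReal = ((μ A).toReal)⁻¹ := ENNReal.toReal_inv _
  have hmono := setIntegral_mono_on hfint hgint hAmeas hfg
  have hbR0 : (0:ℝ) ≤ (μ B).toReal := ENNReal.toReal_nonneg
  calc ∫ ω, (uhat ω + ε)⁻¹ ∂(μ[|A]) = ((μ A).toReal)⁻¹ * ∫ ω in A, f ω ∂μ := by
        rw [← hinv, ← hcond]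
    _ ≤ ((μ A).toReal)⁻¹ * ((1/u₀) * (μ A).toReal - c * (μ B).toReal) := by
        apply mul_le_mul_of_nonneg_left _ (inv_nonneg.2 haR0.le)
        rw [← hgcalc]
        exact hmono
    _ ≤ -ε / (u₀ * (u₀ + ε)) * (M.choose k : ℝ) * (2 * ε) ^ M + 1 / u₀ := by
        have haRinv : 1 ≤ ((μ A).toReal)⁻¹ := (one_le_inv₀ haR0).2 haR1
        have hcb : 0 ≤ c * (μ B).toReal := mul_nonneg hc0 hbR0
        have h5 : c * (μ B).toReal ≤ ((μ A).toReal)⁻¹ * (c * (μ B).toReal) :=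
          le_mul_of_one_le_left hcb haRinv
        have heq : ((μ A).toReal)⁻¹ * ((1/u₀) * (μ A).toReal - c * (μ B).toReal)
            = 1/u₀ - ((μ A).toReal)⁻¹ * (c * (μ B).toReal) := by
          rw [mul_sub]
          congr 1
          field_simp
        have hRHSeq : -ε / (u₀ * (u₀ + ε)) * (M.choose k : ℝ) * (2 * ε) ^ M + 1 / u₀
            = 1/u₀ - ε/(u₀*(u₀+ε)) * (M.choose k) * (2*ε)^M := by ring
        rw [heq, hRHSeq]
        linarith [hkey, h5]
end
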